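/- Let w be a morphism in the Weyl groupoid of a Cartan scheme with finite root system, with reduced decomposition w = σ_{i_1}···σ_{i_k} and another (not necessarily reduced) decomposition w = σ_{j_1}···σ_{j_l}. Then {i_1,...,i_k} ⊆ {j_1,...,j_l} as sets. In particular, any two reduced decompositions of w use the same set of letters. -/

import Mathlib

set_option linter.unusedSectionVars false

/-- A Cartan scheme `C = C(I, A, (ρ_i), (C^a))`. -/
structure CartanScheme (I A : Type) [Fintype I] [DecidableEq I] [Fintype A] [Nonempty A] where
  ρ : I → A → A
  c : A → I → I → ℤ
  ρ_invol : ∀ i a, ρ i (ρ i a) = a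
  c_diag : ∀ a i, c a i i = 2
  c_offdiag_nonpos : ∀ a i j, i ≠ j → c a i j ≤ 0
  c_zero_symm : ∀ a i j, c a i j = 0 → c a j i = 0
  c_rho : ∀ a i j, c (ρ i a) i j = c a i j

namespace CartanScheme

variable {I A : Type} [Fintype I] [DecidableEq I] [Fintype A] [Nonempty A] [DecidableEq A]
variable (C : CartanScheme I A)

/-- The simple reflection `σ_i^a` as a map `ℤ^I → ℤ^I`, `σ_i^a(α_j) = α_j - c^a_{ij} α_i`. -/
def sigma (a : A) (i : I) : (I → ℤ) → (I → ℤ) :=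
  fun v k => v k - (if k = i then ∑ j, C.c a i j * v j else 0)

/-- Target object of the word `[i_1, …, i_k]` read at source object `a`:
`ρ_{i_1} ⋯ ρ_{i_k}(a)`. -/
def wordTarget (a : A) : List I → A
  | [] => a
  | i :: l => C.ρ i (wordTarget a l)

/-- The map `σ_{i_1} ⋯ σ_{i_k}^a : ℤ^I → ℤ^I` determined by a word with source `a`. -/
def wordMap (a : A) : List I → ((I → ℤ) → (I → ℤ))
  | [] => id
  | i :: l => C.sigma (C.wordTarget a l) i ∘ wordMap a l

theorem wordTarget_append (a : A) (l₁ l₂ : List I) :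
    C.wordTarget a (l₁ ++ l₂) = C.wordTarget (C.wordTarget a l₂) l₁ := by
  induction l₁ with
  | nil => rfl
  | cons i l ih => simp [wordTarget, ih]

theorem wordMap_append (a : A) (l₁ l₂ : List I) :
    C.wordMap a (l₁ ++ l₂) = C.wordMap (C.wordTarget a l₂) l₁ ∘ C.wordMap a l₂ := by
  induction l₁ with
  | nil => rfl
  | cons i l ih => simp [wordMap, ih, wordTarget_append, Function.comp_assoc]

/-- A morphism of the Weyl groupoid `W(C)`: a source object, a target object, and a map
`ℤ^I → ℤ^I` which is a composition of simple reflections along some word. -/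
@[ext]
structure Mor where
  src : A
  tgt : A
  toFun : (I → ℤ) → (I → ℤ)
  spec : ∃ l : List I, C.wordTarget src l = tgt ∧ C.wordMap src l = toFun

variable {C}

/-- A word realizes a morphism. -/
def Realizes (w : Mor C) (l : List I) : Prop :=
  C.wordTarget w.src l = w.tgt ∧ C.wordMap w.src l = w.toFun

variable (C)

/-- The identity morphism `id^a`. -/
def idMor (a : A) : Mor C := ⟨a, a, id, ⟨[], rfl, rfl⟩⟩

/-- The generator `σ_i^a ∈ Hom(a, ρ_i(a))`. -/
def genMor (i : I) (a : A) : Mor C :=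
  ⟨a, C.ρ i a, C.sigma a i, ⟨[i], rfl, Function.comp_id _⟩⟩

/-- The simple reflection with target `a`, i.e. `id^a σ_i = σ_i^{ρ_i(a)} ∈ Hom(ρ_i(a), a)`. -/
def sgen (a : A) (i : I) : Mor C :=
  { src := C.ρ i a, tgt := a, toFun := C.sigma (C.ρ i a) i,
    spec := ⟨[i], by simp [wordTarget, C.ρ_invol], Function.comp_id _⟩ }

variable {C}

/-- Composition `u ∘ v` (with `v` applied first); junk value `u` if not composable. -/
def Mor.comp (u v : Mor C) : Mor C :=
  if h : v.tgt = u.src then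
    { src := v.src, tgt := u.tgt, toFun := u.toFun ∘ v.toFun,
      spec := by
        obtain ⟨lu, hu1, hu2⟩ := u.spec
        obtain ⟨lv, hv1, hv2⟩ := v.spec
        refine ⟨lu ++ lv, ?_, ?_⟩
        · rw [C.wordTarget_append, hv1, h, hu1]
        · rw [C.wordMap_append, hv1, h, hu2, hv2] }
  else u

/-- Length of a morphism: minimal length of a realizing word. -/
noncomputable def len (w : Mor C) : ℕ := sInf {k | ∃ l : List I, Realizes w l ∧ l.length = k}

/-- A reduced decomposition. -/
def IsReduced (w : Mor C) (l : List I) : Prop := Realizes w l ∧ l.length = len w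

/-- The (right) weak order: `u ≤_R uv` iff `ℓ(uv) = ℓ(u) + ℓ(v)`. -/
def weakLe (u w : Mor C) : Prop :=
  ∃ v : Mor C, v.tgt = u.src ∧ w = u.comp v ∧ len w = len u + len v

/-- Membership in the parabolic subgroupoid `W_J(C)`. -/
def InParabolic (J : Set I) (w : Mor C) : Prop :=
  ∃ l : List I, (∀ i ∈ l, i ∈ J) ∧ Realizes w l

/-- Length with respect to the generators `σ_j`, `j ∈ J`. -/
noncomputable def lenPar (J : Set I) (w : Mor C) : ℕ :=
  sInf {k | ∃ l : List I, (∀ i ∈ l, i ∈ J) ∧ Realizes w l ∧ l.length = k}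

/-- The set of letters occurring in some reduced decomposition of `w`;
by the theorem on reduced decompositions this is the set `J(w)`. -/
def Jset (w : Mor C) : Set I := {i | ∃ l : List I, IsReduced w l ∧ i ∈ l}

variable (C)

/-- The set of real roots at the object `a`. -/
def roots (a : A) : Set (I → ℤ) :=
  {α | ∃ (b : A) (l : List I) (j : I),
    C.wordTarget b l = a ∧ α = C.wordMap b l (Pi.single j 1)}

/-- The set of positive (real) roots at `a`. -/
def posRoots (a : A) : Set (I → ℤ) := {α ∈ C.roots a | ∀ i, 0 ≤ α i}

/-- `R^re(C)` is a finite root system of type `C`: axioms (R1), (R2), (R4) and finiteness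
((R3) holds automatically for real roots). -/
def IsFRS : Prop :=
  (∀ a : A, (C.roots a).Finite) ∧
  (∀ (a : A) (α : I → ℤ), α ∈ C.roots a → (∀ i, 0 ≤ α i) ∨ (∀ i, α i ≤ 0)) ∧
  (∀ (a : A) (i : I) (α : I → ℤ), α ∈ C.roots a → (∃ z : ℤ, α = z • Pi.single i 1) →
    α = Pi.single i 1 ∨ α = -Pi.single i 1) ∧
  (∀ (a : A) (i j : I), i ≠ j →
    (fun x => C.ρ i (C.ρ j x))^[(C.roots a ∩
      {α | ∃ m n : ℕ, α = (m : ℤ) • Pi.single i 1 + (n : ℤ) • Pi.single j 1}).ncard] a = a)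

variable {C}

/-- `I_L(w)`: the set of simple reflections with target `w.tgt` below `w` in weak order. -/
def IL (w : Mor C) : Set I := {i | weakLe (sgen C w.tgt i) w}

/-- `m` is the longest element of `Hom(-,a) ∩ W_J(C)`, i.e. `w_J` at the object `a`. -/
def IsLongestPar (a : A) (J : Set I) (m : Mor C) : Prop :=
  m.tgt = a ∧ InParabolic J m ∧
    ∀ x : Mor C, x.tgt = a → InParabolic J x → weakLe x m

/-- `m` is the longest element `w_I` of `Hom(-,a)`. -/
def IsLongestAt (a : A) (m : Mor C) : Prop :=
  m.tgt = a ∧ ∀ x : Mor C, x.tgt = a → weakLe x m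

/-- `z` is the meet of `x` and `y` in `(Hom(-,a), ≤_R)`. -/
def IsMeet (a : A) (x y z : Mor C) : Prop :=
  z.tgt = a ∧ weakLe z x ∧ weakLe z y ∧
    ∀ t : Mor C, t.tgt = a → weakLe t x → weakLe t y → weakLe t z

/-- `z` is the join of `x` and `y` in `(Hom(-,a), ≤_R)`. -/
def IsJoin (a : A) (x y z : Mor C) : Prop :=
  z.tgt = a ∧ weakLe x z ∧ weakLe y z ∧
    ∀ t : Mor C, t.tgt = a → weakLe x t → weakLe y t → weakLe z t

/-- The left coset `u W_J(C) ⊆ Hom(-, u.tgt)`. -/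
def leftCoset (u : Mor C) (J : Set I) : Set (Mor C) :=
  {x | ∃ v : Mor C, InParabolic J v ∧ v.tgt = u.src ∧ x = u.comp v}

end CartanScheme
namespace CartanScheme

variable {I A : Type} [Fintype I] [DecidableEq I] [Fintype A] [Nonempty A] [DecidableEq A]
variable {C : CartanScheme I A}

/-! ### Basic linear algebra of `sigma` and `wordMap` -/

/-- Positivity of a vector. -/
def PosV (v : I → ℤ) : Prop := ∀ k, 0 ≤ v k

/-- Negativity of a vector. -/
def NegV (v : I → ℤ) : Prop := ∀ k, v k ≤ 0

/-- The linear functional given by row `i` of the Cartan matrix at `a`. -/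
def phi (C : CartanScheme I A) (a : A) (i : I) (v : I → ℤ) : ℤ := ∑ j, C.c a i j * v j

lemma sigma_apply (a : A) (i k : I) (v : I → ℤ) :
    C.sigma a i v k = v k - (if k = i then C.phi a i v else 0) := rfl

lemma sigma_apply_ne (a : A) {i k : I} (h : k ≠ i) (v : I → ℤ) :
    C.sigma a i v k = v k := by simp [sigma_apply, h]

lemma sigma_apply_self (a : A) (i : I) (v : I → ℤ) :
    C.sigma a i v i = v i - C.phi a i v := by simp [sigma_apply]

lemma phi_add (a : A) (i : I) (u v : I → ℤ) :
    C.phi a i (u + v) = C.phi a i u + C.phi a i v := by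
  simp [phi, mul_add, Finset.sum_add_distrib]

lemma phi_smul (a : A) (i : I) (z : ℤ) (v : I → ℤ) :
    C.phi a i (z • v) = z * C.phi a i v := by
  simp only [phi, Pi.smul_apply, smul_eq_mul, Finset.mul_sum]
  congr 1; funext j; ring

lemma phi_single (a : A) (i j : I) : C.phi a i (Pi.single j 1) = C.c a i j := by
  classical
  simp only [phi]
  rw [Finset.sum_eq_single j]
  · simp
  · intro b _ hb; simp [Pi.single_apply, hb]
  · intro h; exact absurd (Finset.mem_univ j) h

lemma phi_self (a : A) (i : I) (v : I → ℤ) :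
    C.phi a i (C.sigma a i v) = - C.phi a i v := by
  have : C.sigma a i v = v + (- C.phi a i v) • Pi.single i 1 := by
    funext k
    by_cases h : k = i
    · subst h; simp [sigma_apply_self]; ring
    · simp [sigma_apply_ne _ h, Pi.single_apply, h]
  rw [this, phi_add, phi_smul, phi_single, C.c_diag]; ring

lemma sigma_add (a : A) (i : I) (u v : I → ℤ) :
    C.sigma a i (u + v) = C.sigma a i u + C.sigma a i v := by
  funext k; by_cases h : k = i
  · subst h; simp [sigma_apply_self, phi_add]; ring
  · simp [sigma_apply_ne _ h]

lemma sigma_smul (a : A) (i : I) (z : ℤ) (v : I → ℤ) :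
    C.sigma a i (z • v) = z • C.sigma a i v := by
  funext k; by_cases h : k = i
  · subst h
    simp only [sigma_apply_self, Pi.smul_apply, smul_eq_mul, phi_smul]; ring
  · simp only [sigma_apply_ne _ h, Pi.smul_apply, smul_eq_mul]

/-- Two reflections with equal rows compose to the identity. -/
lemma sigma_sigma_of_rows (a b : A) (i : I) (h : ∀ j, C.c b i j = C.c a i j)
    (v : I → ℤ) : C.sigma b i (C.sigma a i v) = v := by
  have hphi : ∀ w, C.phi b i w = C.phi a i w := by
    intro w; simp [phi, h]
  funext k; by_cases hk : k = i
  · subst hk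
    rw [sigma_apply_self, sigma_apply_self, hphi, phi_self]; ring
  · rw [sigma_apply_ne _ hk, sigma_apply_ne _ hk]

lemma sigma_sigma_rho (a : A) (i : I) (v : I → ℤ) :
    C.sigma (C.ρ i a) i (C.sigma a i v) = v :=
  sigma_sigma_of_rows a _ i (fun j => C.c_rho a i j) v

lemma sigma_sigma_rho' (a : A) (i : I) (v : I → ℤ) :
    C.sigma a i (C.sigma (C.ρ i a) i v) = v := by
  have := sigma_sigma_of_rows (C.ρ i a) a i (fun j => (C.c_rho a i j).symm) v
  exact this

lemma sigma_single_self (a : A) (i : I) :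
    C.sigma a i (Pi.single i 1) = - Pi.single i 1 := by
  funext k; by_cases h : k = i
  · subst h; rw [sigma_apply_self, phi_single, C.c_diag]; simp
  · rw [sigma_apply_ne _ h]; simp [Pi.single_apply, h]

lemma wordMap_nil (a : A) (v : I → ℤ) : C.wordMap a [] v = v := rfl

lemma wordMap_cons (a : A) (i : I) (l : List I) (v : I → ℤ) :
    C.wordMap a (i :: l) v = C.sigma (C.wordTarget a l) i (C.wordMap a l v) := rfl

lemma wordMap_add (a : A) (l : List I) (u v : I → ℤ) :
    C.wordMap a l (u + v) = C.wordMap a l u + C.wordMap a l v := by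
  induction l with
  | nil => rfl
  | cons i l ih => simp [wordMap_cons, ih, sigma_add]

lemma wordMap_smul (a : A) (l : List I) (z : ℤ) (v : I → ℤ) :
    C.wordMap a l (z • v) = z • C.wordMap a l v := by
  induction l with
  | nil => rfl
  | cons i l ih => rw [wordMap_cons, ih, sigma_smul, wordMap_cons]

lemma wordMap_neg (a : A) (l : List I) (v : I → ℤ) :
    C.wordMap a l (-v) = - C.wordMap a l v := by
  have h := C.wordMap_smul a l (-1) v
  simpa using h

lemma wordMap_zero (a : A) (l : List I) : C.wordMap a l 0 = 0 := by
  have h := C.wordMap_smul a l 0 0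
  simpa using h

/-- Letters not in the word leave coordinates untouched. -/
lemma wordMap_apply_of_not_mem (a : A) (l : List I) (v : I → ℤ) {k : I}
    (h : k ∉ l) : C.wordMap a l v k = v k := by
  induction l with
  | nil => rfl
  | cons i l ih =>
      have hki : k ≠ i := fun e => h (e ▸ (List.mem_cons_self (a := i) (l := l)))
      rw [wordMap_cons, sigma_apply_ne _ hki]
      exact ih (fun hm => h (List.mem_cons_of_mem i hm))

lemma wordTarget_nil (a : A) : C.wordTarget a ([] : List I) = a := rfl

lemma wordTarget_cons (a : A) (i : I) (l : List I) :
    C.wordTarget a (i :: l) = C.ρ i (C.wordTarget a l) := rfl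

lemma wordTarget_singleton (a : A) (i : I) : C.wordTarget a [i] = C.ρ i a := rfl

/-- Reversal: target returns. -/
lemma wordTarget_reverse (a : A) (l : List I) :
    C.wordTarget (C.wordTarget a l) l.reverse = a := by
  induction l with
  | nil => rfl
  | cons i l ih =>
      rw [List.reverse_cons, C.wordTarget_append]
      have h1 : C.wordTarget (C.wordTarget a (i :: l)) [i] = C.wordTarget a l := by
        rw [wordTarget_singleton, wordTarget_cons, C.ρ_invol]
      rw [h1, ih]

/-- Reversal: the reversed word inverts the map. -/
lemma wordMap_reverse (a : A) (l : List I) (v : I → ℤ) :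
    C.wordMap (C.wordTarget a l) l.reverse (C.wordMap a l v) = v := by
  induction l with
  | nil => rfl
  | cons i l ih =>
      rw [List.reverse_cons, C.wordMap_append]
      have h1 : C.wordTarget (C.wordTarget a (i :: l)) [i] = C.wordTarget a l := by
        rw [wordTarget_singleton, wordTarget_cons, C.ρ_invol]
      simp only [Function.comp_apply, h1]
      have h2 : C.wordMap (C.wordTarget a (i :: l)) [i] (C.wordMap a (i :: l) v)
          = C.wordMap a l v := by
        show C.sigma (C.wordTarget (C.wordTarget a (i :: l)) []) i _ = _
        rw [wordMap_cons]
        show C.sigma (C.wordTarget a (i :: l)) i _ = _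
        rw [wordTarget_cons]
        exact sigma_sigma_rho _ i _
      rw [h2, ih]

lemma wordMap_reverse' (a : A) (l : List I) (v : I → ℤ) :
    C.wordMap a l (C.wordMap (C.wordTarget a l) l.reverse v) = v := by
  have h1 := C.wordTarget_reverse a l
  have h2 := C.wordMap_reverse (C.wordTarget a l) l.reverse v
  rw [h1, List.reverse_reverse] at h2
  exact h2

end CartanScheme
namespace CartanScheme

variable {I A : Type} [Fintype I] [DecidableEq I] [Fintype A] [Nonempty A] [DecidableEq A]
variable {C : CartanScheme I A}

/-! ### Roots -/

lemma sigma_neg (a : A) (i : I) (v : I → ℤ) :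
    C.sigma a i (-v) = - C.sigma a i v := by
  have h := C.sigma_smul a i (-1) v
  simpa using h

lemma single_mem_roots (a : A) (j : I) : (Pi.single j 1 : I → ℤ) ∈ C.roots a :=
  ⟨a, [], j, rfl, rfl⟩

lemma wordMap_mem_roots {a : A} (l : List I) {α : I → ℤ} (h : α ∈ C.roots a) :
    C.wordMap a l α ∈ C.roots (C.wordTarget a l) := by
  obtain ⟨b, l₀, j, hb, hα⟩ := h
  refine ⟨b, l ++ l₀, j, ?_, ?_⟩
  · rw [C.wordTarget_append, hb]
  · rw [C.wordMap_append, hb, hα]; rfl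

lemma sigma_mem_roots {a : A} (i : I) {α : I → ℤ} (h : α ∈ C.roots a) :
    C.sigma a i α ∈ C.roots (C.ρ i a) := by
  have h2 := wordMap_mem_roots (C := C) [i] h
  simpa [wordMap_cons, wordTarget_singleton, wordTarget_nil, wordMap_nil] using h2

lemma neg_mem_roots {a : A} {α : I → ℤ} (h : α ∈ C.roots a) : -α ∈ C.roots a := by
  obtain ⟨b, l₀, j, hb, hα⟩ := h
  refine ⟨C.ρ j b, l₀ ++ [j], j, ?_, ?_⟩
  · rw [C.wordTarget_append, wordTarget_singleton, C.ρ_invol, hb]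
  · rw [C.wordMap_append, wordTarget_singleton, C.ρ_invol, hα]
    show _ = C.wordMap b l₀ (C.wordMap (C.ρ j b) [j] (Pi.single j 1))
    have h1 : C.wordMap (C.ρ j b) [j] (Pi.single j 1) = -(Pi.single j 1) := by
      show C.sigma (C.wordTarget (C.ρ j b) []) j (Pi.single j 1) = _
      exact sigma_single_self _ j
    rw [h1, wordMap_neg]

lemma roots_nonzero {a : A} {α : I → ℤ} (h : α ∈ C.roots a) : α ≠ 0 := by
  obtain ⟨b, l₀, j, hb, hα⟩ := h
  intro h0
  have h1 : C.wordMap (C.wordTarget b l₀) l₀.reverse (C.wordMap b l₀ (Pi.single j 1))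
      = Pi.single j 1 := C.wordMap_reverse b l₀ _
  rw [← hα, h0, wordMap_zero] at h1
  have := congrFun h1 j
  simp at this

lemma pos_or_neg (hC : C.IsFRS) {a : A} {α : I → ℤ} (h : α ∈ C.roots a) :
    PosV α ∨ NegV α := hC.2.1 a α h

lemma neg_of_not_pos (hC : C.IsFRS) {a : A} {α : I → ℤ} (h : α ∈ C.roots a)
    (hn : ¬ PosV α) : NegV α := (pos_or_neg hC h).resolve_left hn

lemma not_pos_of_neg_root (hC : C.IsFRS) {a : A} {α : I → ℤ} (h : α ∈ C.roots a)
    (hn : NegV α) : ¬ PosV α := by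
  intro hp
  apply roots_nonzero h
  funext k
  exact le_antisymm (hn k) (hp k)

lemma posV_neg_iff {α : I → ℤ} : PosV (-α) ↔ NegV α := by
  constructor <;> intro h k <;> have := h k <;> simp at this ⊢ <;> omega

lemma posV_single (j : I) : PosV (Pi.single j 1 : I → ℤ) := by
  intro k; by_cases h : k = j <;> simp [Pi.single_apply, h]

lemma not_posV_neg_single (j : I) : ¬ PosV (-(Pi.single j 1 : I → ℤ)) := by
  intro h; have := h j; simp at this

/-- The key "Claim A": a positive root made non-positive by `σ_i^a` must be `α_i`. -/
lemma claimA (hC : C.IsFRS) {a : A} (i : I) {α : I → ℤ} (hr : α ∈ C.roots a)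
    (hp : PosV α) (hn : ¬ PosV (C.sigma a i α)) : α = Pi.single i 1 := by
  have hz : ∀ k, k ≠ i → α k = 0 := by
    intro k hk
    by_contra hne
    have hgt : 0 < α k := lt_of_le_of_ne (hp k) (Ne.symm hne)
    have hroot2 : C.sigma a i α ∈ C.roots (C.ρ i a) := sigma_mem_roots i hr
    rcases pos_or_neg hC hroot2 with h1 | h1
    · exact hn h1
    · have := h1 k
      rw [sigma_apply_ne _ hk] at this
      omega
  have hform : α = (α i) • Pi.single i 1 := by
    funext k
    by_cases h : k = i
    · subst h; simp
    · simp [Pi.single_apply, h, hz k h]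
  rcases hC.2.2.1 a i α hr ⟨α i, hform⟩ with h | h
  · exact h
  · exfalso
    have := hp i
    rw [h] at this
    simp at this

/-! ### Inversion sets -/

/-- Inversion set relative to a class `K` of vectors. -/
def flipsK (C : CartanScheme I A) (K : (I → ℤ) → Prop) (a : A) (f : (I → ℤ) → (I → ℤ)) :
    Set (I → ℤ) :=
  {α | α ∈ C.roots a ∧ PosV α ∧ K α ∧ ¬ PosV (f α)}

lemma flipsK_finite (hC : C.IsFRS) (K : (I → ℤ) → Prop) (a : A)
    (f : (I → ℤ) → (I → ℤ)) : (C.flipsK K a f).Finite :=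
  (hC.1 a).subset (fun _ h => h.1)

section LemmaC

variable (K : (I → ℤ) → Prop) (a : A) (l : List I) (j : I)

/-- Inversion set of `σ_j ∘ f`, positive case: it grows by `β = f⁻¹(α_j)`. -/
lemma flipsK_cons_pos (hC : C.IsFRS)
    (hK : K (C.wordMap (C.wordTarget a l) l.reverse (Pi.single j 1)))
    (hβ : PosV (C.wordMap (C.wordTarget a l) l.reverse (Pi.single j 1))) :
    C.flipsK K a (C.wordMap a (j :: l)) =
      insert (C.wordMap (C.wordTarget a l) l.reverse (Pi.single j 1))
        (C.flipsK K a (C.wordMap a l)) ∧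
    (C.wordMap (C.wordTarget a l) l.reverse (Pi.single j 1)) ∉
        C.flipsK K a (C.wordMap a l) := by
  set y := C.wordTarget a l with hy
  set f : (I → ℤ) → (I → ℤ) := C.wordMap a l with hf
  set g : (I → ℤ) → (I → ℤ) := C.wordMap y l.reverse with hg
  set β : I → ℤ := g (Pi.single j 1) with hβdef
  have hfg : ∀ v, f (g v) = v := fun v => C.wordMap_reverse' a l v
  have hgf : ∀ v, g (f v) = v := fun v => C.wordMap_reverse a l v
  have hfneg : ∀ v, f (-v) = -(f v) := fun v => C.wordMap_neg a l v
  have hgneg : ∀ v, g (-v) = -(g v) := fun v => C.wordMap_neg y l.reverse v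
  have hβroot : β ∈ C.roots a := by
    have h1 : (Pi.single j 1 : I → ℤ) ∈ C.roots y := single_mem_roots y j
    have h2 := wordMap_mem_roots (C := C) l.reverse h1
    rwa [C.wordTarget_reverse a l] at h2
  have hcons : ∀ v, C.wordMap a (j :: l) v = C.sigma y j (f v) := fun v => rfl
  have hfβ : f β = Pi.single j 1 := hfg _
  have hβnotflip : β ∉ C.flipsK K a f := by
    intro hmem
    exact hmem.2.2.2 (by rw [hfβ]; exact posV_single j)
  refine ⟨?_, hβnotflip⟩
  ext α
  constructor
  · rintro ⟨hroot, hpos, hKα, hnp⟩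
    rw [hcons] at hnp
    have hfαroot : f α ∈ C.roots y := wordMap_mem_roots l hroot
    by_cases hp : PosV (f α)
    · have h1 : f α = Pi.single j 1 := claimA hC j hfαroot hp hnp
      have : α = β := by rw [← hgf α, h1]
      rw [this]; exact Set.mem_insert _ _
    · exact Set.mem_insert_of_mem _ ⟨hroot, hpos, hKα, hp⟩
  · intro hmem
    rcases Set.mem_insert_iff.1 hmem with h | h
    · subst h
      refine ⟨hβroot, hβ, hK, ?_⟩
      rw [hcons, hfβ, sigma_single_self]
      exact not_posV_neg_single j
    · obtain ⟨hroot, hpos, hKα, hnpf⟩ := h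
      refine ⟨hroot, hpos, hKα, ?_⟩
      rw [hcons]
      intro hP
      have hfαroot : f α ∈ C.roots y := wordMap_mem_roots l hroot
      have hneg : NegV (f α) := neg_of_not_pos hC hfαroot hnpf
      have h1 : -(f α) ∈ C.roots y := neg_mem_roots hfαroot
      have h2 : PosV (-(f α)) := posV_neg_iff.2 hneg
      have h3 : ¬ PosV (C.sigma y j (-(f α))) := by
        rw [sigma_neg]
        intro h4
        have hx : C.sigma y j (f α) ∈ C.roots (C.ρ j y) := sigma_mem_roots j hfαroot
        apply roots_nonzero hx
        funext k
        have := hP k; have := h4 k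
        simp at *; omega
      have h5 : -(f α) = Pi.single j 1 := claimA hC j h1 h2 h3
      have h6 : f α = -(Pi.single j 1) := by
        rw [← neg_neg (f α), h5]
      have h7 : α = -β := by
        rw [← hgf α, h6, hgneg]
      apply roots_nonzero hroot
      funext k
      have hp1 := hpos k
      have hp2 := hβ k
      rw [h7] at hp1 ⊢
      simp at hp1 ⊢
      omega

/-- Inversion set of `σ_j ∘ f`, negative case: it loses `-β`. -/
lemma flipsK_cons_neg (hC : C.IsFRS)
    (hK' : K (-(C.wordMap (C.wordTarget a l) l.reverse (Pi.single j 1))))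
    (hβ : ¬ PosV (C.wordMap (C.wordTarget a l) l.reverse (Pi.single j 1))) :
    C.flipsK K a (C.wordMap a (j :: l)) =
      (C.flipsK K a (C.wordMap a l)) \
        {-(C.wordMap (C.wordTarget a l) l.reverse (Pi.single j 1))} ∧
    -(C.wordMap (C.wordTarget a l) l.reverse (Pi.single j 1)) ∈
        C.flipsK K a (C.wordMap a l) := by
  set y := C.wordTarget a l with hy
  set f : (I → ℤ) → (I → ℤ) := C.wordMap a l with hf
  set g : (I → ℤ) → (I → ℤ) := C.wordMap y l.reverse with hg
  set β : I → ℤ := g (Pi.single j 1) with hβdef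
  have hfg : ∀ v, f (g v) = v := fun v => C.wordMap_reverse' a l v
  have hgf : ∀ v, g (f v) = v := fun v => C.wordMap_reverse a l v
  have hfneg : ∀ v, f (-v) = -(f v) := fun v => C.wordMap_neg a l v
  have hgneg : ∀ v, g (-v) = -(g v) := fun v => C.wordMap_neg y l.reverse v
  have hβroot : β ∈ C.roots a := by
    have h1 : (Pi.single j 1 : I → ℤ) ∈ C.roots y := single_mem_roots y j
    have h2 := wordMap_mem_roots (C := C) l.reverse h1
    rwa [C.wordTarget_reverse a l] at h2
  have hcons : ∀ v, C.wordMap a (j :: l) v = C.sigma y j (f v) := fun v => rfl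
  have hfβ : f β = Pi.single j 1 := hfg _
  have hβneg : NegV β := neg_of_not_pos hC hβroot hβ
  have hfnegβ : f (-β) = -(Pi.single j 1) := by rw [hfneg, hfβ]
  have hmem : -β ∈ C.flipsK K a f := by
    refine ⟨neg_mem_roots hβroot, posV_neg_iff.2 hβneg, hK', ?_⟩
    rw [hfnegβ]
    exact not_posV_neg_single j
  refine ⟨?_, hmem⟩
  ext α
  constructor
  · rintro ⟨hroot, hpos, hKα, hnp⟩
    rw [hcons] at hnp
    have hfαroot : f α ∈ C.roots y := wordMap_mem_roots l hroot
    by_cases hp : PosV (f α)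
    · exfalso
      have h1 : f α = Pi.single j 1 := claimA hC j hfαroot hp hnp
      have h2 : α = β := by rw [← hgf α, h1]
      rw [h2] at hpos
      exact hβ hpos
    · refine ⟨⟨hroot, hpos, hKα, hp⟩, ?_⟩
      intro hsing
      rw [Set.mem_singleton_iff] at hsing
      rw [hsing, hfnegβ] at hnp
      rw [sigma_neg, sigma_single_self] at hnp
      simp at hnp
      exact hnp (posV_single j)
  · rintro ⟨⟨hroot, hpos, hKα, hnpf⟩, hne⟩
    rw [Set.mem_singleton_iff] at hne
    refine ⟨hroot, hpos, hKα, ?_⟩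
    rw [hcons]
    intro hP
    have hfαroot : f α ∈ C.roots y := wordMap_mem_roots l hroot
    have hneg : NegV (f α) := neg_of_not_pos hC hfαroot hnpf
    have h1 : -(f α) ∈ C.roots y := neg_mem_roots hfαroot
    have h2 : PosV (-(f α)) := posV_neg_iff.2 hneg
    have h3 : ¬ PosV (C.sigma y j (-(f α))) := by
      rw [sigma_neg]
      intro h4
      have hx : C.sigma y j (f α) ∈ C.roots (C.ρ j y) := sigma_mem_roots j hfαroot
      apply roots_nonzero hx
      funext k
      have := hP k; have := h4 k
      simp at *; omega
    have h5 : -(f α) = Pi.single j 1 := claimA hC j h1 h2 h3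
    have h6 : f α = -(Pi.single j 1) := by rw [← neg_neg (f α), h5]
    exact hne (by rw [← hgf α, h6, hgneg])

end LemmaC

/-- The inversion sets of a word map and of its reverse have the same size. -/
lemma flipsK_reverse_ncard (hC : C.IsFRS) (K : (I → ℤ) → Prop)
    (hKneg : ∀ v, K v → K (-v)) (a : A) (l : List I)
    (hKf : ∀ v, K v → K (C.wordMap a l v))
    (hKg : ∀ v, K v → K (C.wordMap (C.wordTarget a l) l.reverse v)) :
    (C.flipsK K (C.wordTarget a l) (C.wordMap (C.wordTarget a l) l.reverse)).ncard
      = (C.flipsK K a (C.wordMap a l)).ncard := by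
  set y := C.wordTarget a l with hy
  set f : (I → ℤ) → (I → ℤ) := C.wordMap a l with hf
  set g : (I → ℤ) → (I → ℤ) := C.wordMap y l.reverse with hg
  have hfg : ∀ v, f (g v) = v := fun v => C.wordMap_reverse' a l v
  have hgf : ∀ v, g (f v) = v := fun v => C.wordMap_reverse a l v
  have hfneg : ∀ v, f (-v) = -(f v) := fun v => C.wordMap_neg a l v
  have hgneg : ∀ v, g (-v) = -(g v) := fun v => C.wordMap_neg y l.reverse v
  have himg : C.flipsK K y g = (fun α => -(f α)) '' (C.flipsK K a f) := by
    ext δ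
    constructor
    · rintro ⟨hroot, hpos, hKδ, hnp⟩
      refine ⟨-(g δ), ⟨?_, ?_, ?_, ?_⟩, ?_⟩
      · have : g δ ∈ C.roots (C.wordTarget y l.reverse) := wordMap_mem_roots l.reverse hroot
        rw [C.wordTarget_reverse a l] at this
        exact neg_mem_roots this
      · have hgroot : g δ ∈ C.roots a := by
          have := wordMap_mem_roots (C := C) l.reverse hroot
          rwa [C.wordTarget_reverse a l] at this
        exact posV_neg_iff.2 (neg_of_not_pos hC hgroot hnp)
      · exact hKneg _ (hKg _ hKδ)
      · show ¬ PosV (f (-(g δ)))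
        rw [hfneg, hfg]
        intro hP
        apply roots_nonzero hroot
        funext k
        have h1 := hP k; have h2 := hpos k
        simp at h1 ⊢; omega
      · show -(f (-(g δ))) = δ
        rw [hfneg, hfg, neg_neg]
    · rintro ⟨α, ⟨hroot, hpos, hKα, hnp⟩, hδ⟩
      subst hδ
      have hfroot : f α ∈ C.roots y := wordMap_mem_roots l hroot
      refine ⟨neg_mem_roots hfroot, posV_neg_iff.2 (neg_of_not_pos hC hfroot hnp),
        hKneg _ (hKf _ hKα), ?_⟩
      show ¬ PosV (g (-(f α)))
      rw [hgneg, hgf]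
      intro hP
      apply roots_nonzero hroot
      funext k
      have h1 := hP k; have h2 := hpos k
      simp at h1 ⊢; omega
  rw [himg]
  apply Set.ncard_image_of_injOn
  intro u hu v hv huv
  have : f u = f v := by
    have := congrArg Neg.neg huv
    simpa using this
  calc u = g (f u) := (hgf u).symm
    _ = g (f v) := by rw [this]
    _ = v := hgf v

end CartanScheme
namespace CartanScheme

variable {I A : Type} [Fintype I] [DecidableEq I] [Fintype A] [Nonempty A] [DecidableEq A]
variable {C : CartanScheme I A}

/-! ### Counting inversions -/

/-- The trivial class. -/
def TrivK : (I → ℤ) → Prop := fun _ => True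

/-- Number of inversions of a map at a source. -/
noncomputable def nInv (C : CartanScheme I A) (a : A) (f : (I → ℤ) → (I → ℤ)) : ℕ :=
  (C.flipsK TrivK a f).ncard

lemma wordMap_singleton (a : A) (c : I) : C.wordMap a [c] = C.sigma a c := by
  funext v; rfl

lemma nInv_cons_pos (hC : C.IsFRS) (a : A) (l : List I) (j : I)
    (hβ : PosV (C.wordMap (C.wordTarget a l) l.reverse (Pi.single j 1))) :
    C.nInv a (C.wordMap a (j :: l)) = C.nInv a (C.wordMap a l) + 1 := by
  obtain ⟨hset, hnm⟩ := flipsK_cons_pos (C := C) TrivK a l j hC trivial hβ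
  rw [nInv, hset, Set.ncard_insert_of_notMem hnm (flipsK_finite hC _ _ _)]
  rfl

lemma nInv_cons_neg (hC : C.IsFRS) (a : A) (l : List I) (j : I)
    (hβ : ¬ PosV (C.wordMap (C.wordTarget a l) l.reverse (Pi.single j 1))) :
    C.nInv a (C.wordMap a (j :: l)) + 1 = C.nInv a (C.wordMap a l) := by
  obtain ⟨hset, hm⟩ := flipsK_cons_neg (C := C) TrivK a l j hC trivial hβ
  rw [nInv, hset, Set.ncard_diff_singleton_add_one hm (flipsK_finite hC _ _ _)]
  rfl

lemma nInv_le_length (hC : C.IsFRS) (a : A) (l : List I) :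
    C.nInv a (C.wordMap a l) ≤ l.length := by
  induction l with
  | nil =>
      rw [show C.nInv a (C.wordMap a []) = 0 from ?_]
      · exact Nat.zero_le _
      · rw [nInv, Set.ncard_eq_zero (flipsK_finite hC _ _ _)]
        ext α; simp only [Set.mem_empty_iff_false, iff_false]
        rintro ⟨_, hpos, _, hnp⟩
        exact hnp hpos
  | cons j l ih =>
      by_cases hβ : PosV (C.wordMap (C.wordTarget a l) l.reverse (Pi.single j 1))
      · have := nInv_cons_pos hC a l j hβ
        simp only [List.length_cons]; omega
      · have := nInv_cons_neg hC a l j hβ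
        simp only [List.length_cons]; omega

lemma nInv_parity (hC : C.IsFRS) (a : A) (l : List I) :
    C.nInv a (C.wordMap a l) % 2 = l.length % 2 := by
  induction l with
  | nil =>
      have h0 : C.nInv a (C.wordMap a []) = 0 := by
        rw [nInv, Set.ncard_eq_zero (flipsK_finite hC _ _ _)]
        ext α; simp only [Set.mem_empty_iff_false, iff_false]
        rintro ⟨_, hpos, _, hnp⟩
        exact hnp hpos
      simp [h0]
  | cons j l ih =>
      by_cases hβ : PosV (C.wordMap (C.wordTarget a l) l.reverse (Pi.single j 1))
      · have := nInv_cons_pos hC a l j hβ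
        simp only [List.length_cons]; omega
      · have := nInv_cons_neg hC a l j hβ
        simp only [List.length_cons]; omega

/-! ### Linearity helpers -/

lemma wordMap_sum (a : A) (l : List I) {β : Type} (s : Finset β) (F : β → (I → ℤ)) :
    C.wordMap a l (∑ k ∈ s, F k) = ∑ k ∈ s, C.wordMap a l (F k) := by
  classical
  induction s using Finset.induction with
  | empty => simp [wordMap_zero]
  | insert _ _ hns ih =>
      rw [Finset.sum_insert hns, Finset.sum_insert hns, wordMap_add, ih]

lemma vec_expand (v : I → ℤ) : v = ∑ k, v k • (Pi.single k 1 : I → ℤ) := by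
  funext r
  rw [Finset.sum_apply]
  rw [Finset.sum_eq_single r]
  · simp
  · intro b _ hb
    simp [Pi.single_apply, Ne.symm hb]
  · intro h; exact absurd (Finset.mem_univ r) h

lemma wordMap_expand (a : A) (l : List I) (v : I → ℤ) :
    C.wordMap a l v = ∑ k, v k • C.wordMap a l (Pi.single k 1) := by
  conv_lhs => rw [vec_expand v]
  rw [wordMap_sum]
  congr 1; funext k
  rw [wordMap_smul]

lemma posV_wordMap_of_cols (a : A) (l : List I)
    (hcols : ∀ j, PosV (C.wordMap a l (Pi.single j 1))) {v : I → ℤ} (hv : PosV v) :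
    PosV (C.wordMap a l v) := by
  intro r
  rw [wordMap_expand]
  rw [Finset.sum_apply]
  apply Finset.sum_nonneg
  intro k _
  have h1 := hv k
  have h2 := hcols k r
  simp only [Pi.smul_apply, smul_eq_mul]
  positivity

/-- If a word map has an inversion, some simple root is sent to a negative root
by the reverse map. -/
lemma exists_descent (hC : C.IsFRS) (a : A) (l : List I)
    (hn : 0 < C.nInv a (C.wordMap a l)) :
    ∃ j, ¬ PosV (C.wordMap (C.wordTarget a l) l.reverse (Pi.single j 1)) := by
  by_contra hcon
  push_neg at hcon
  have hrev : C.nInv (C.wordTarget a l) (C.wordMap (C.wordTarget a l) l.reverse) = 0 := by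
    rw [nInv, Set.ncard_eq_zero (flipsK_finite hC _ _ _)]
    ext δ; simp only [Set.mem_empty_iff_false, iff_false]
    rintro ⟨hroot, hpos, _, hnp⟩
    exact hnp (posV_wordMap_of_cols _ _ hcon hpos)
  have := flipsK_reverse_ncard (C := C) hC TrivK (fun _ _ => trivial) a l
    (fun _ _ => trivial) (fun _ _ => trivial)
  rw [nInv] at hn hrev
  omega

/-! ### Morphism-level length facts -/

/-- Number of inversions of a morphism. -/
noncomputable def nMor (w : Mor C) : ℕ := C.nInv w.src w.toFun

lemma len_spec (w : Mor C) : ∃ l, Realizes w l ∧ l.length = len w := by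
  have hne : {k | ∃ l : List I, Realizes w l ∧ l.length = k}.Nonempty := by
    obtain ⟨l, h1, h2⟩ := w.spec
    exact ⟨l.length, l, ⟨h1, h2⟩, rfl⟩
  exact Nat.sInf_mem hne

lemma len_le {w : Mor C} {l : List I} (h : Realizes w l) : len w ≤ l.length :=
  Nat.sInf_le ⟨l, h, rfl⟩

lemma realizes_n_parity (hC : C.IsFRS) {w : Mor C} {l : List I} (h : Realizes w l) :
    nMor w % 2 = l.length % 2 := by
  have := nInv_parity hC w.src l
  rw [h.2] at this
  exact this

lemma realizes_length_parity (hC : C.IsFRS) {w : Mor C} {l₁ l₂ : List I}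
    (h1 : Realizes w l₁) (h2 : Realizes w l₂) : l₁.length % 2 = l₂.length % 2 := by
  have a1 := realizes_n_parity hC h1
  have a2 := realizes_n_parity hC h2
  omega

lemma nMor_le_len (hC : C.IsFRS) (w : Mor C) : nMor w ≤ len w := by
  obtain ⟨l, hl, hlen⟩ := len_spec w
  have := nInv_le_length hC w.src l
  rw [hl.2] at this
  rw [nMor]
  omega

/-- Precomposition of a morphism with `σ_c` (at the source side). -/
def pre (w : Mor C) (c : I) : Mor C :=
  { src := C.ρ c w.src
    tgt := w.tgt
    toFun := w.toFun ∘ C.sigma (C.ρ c w.src) c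
    spec := by
      obtain ⟨l, h1, h2⟩ := w.spec
      refine ⟨l ++ [c], ?_, ?_⟩
      · rw [C.wordTarget_append, wordTarget_singleton, C.ρ_invol, h1]
      · rw [C.wordMap_append, wordTarget_singleton, C.ρ_invol, h2, wordMap_singleton] }

lemma realizes_pre {w : Mor C} {l : List I} (h : Realizes w l) (c : I) :
    Realizes (pre w c) (l ++ [c]) := by
  constructor
  · show C.wordTarget (C.ρ c w.src) (l ++ [c]) = w.tgt
    rw [C.wordTarget_append, wordTarget_singleton, C.ρ_invol, h.1]
  · show C.wordMap (C.ρ c w.src) (l ++ [c]) = w.toFun ∘ C.sigma (C.ρ c w.src) c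
    rw [C.wordMap_append, wordTarget_singleton, C.ρ_invol, h.2, wordMap_singleton]

lemma sigma_sigma_self (a : A) (i : I) (v : I → ℤ) :
    C.sigma a i (C.sigma a i v) = v :=
  sigma_sigma_of_rows a a i (fun _ => rfl) v

lemma pre_pre (w : Mor C) (c : I) : pre (pre w c) c = w := by
  have h1 : C.ρ c (C.ρ c w.src) = w.src := C.ρ_invol c w.src
  apply Mor.ext
  · exact h1
  · rfl
  · funext v
    show w.toFun (C.sigma (C.ρ c w.src) c (C.sigma (C.ρ c (C.ρ c w.src)) c v))
        = w.toFun v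
    rw [sigma_sigma_rho' (C.ρ c w.src) c v]

lemma len_pre_le (w : Mor C) (c : I) : len (pre w c) ≤ len w + 1 := by
  obtain ⟨l, hl, hlen⟩ := len_spec w
  have := len_le (realizes_pre hl c)
  simp at this
  omega

lemma len_le_pre (w : Mor C) (c : I) : len w ≤ len (pre w c) + 1 := by
  have := len_pre_le (pre w c) c
  rw [pre_pre] at this
  exact this

lemma len_pre_ne (hC : C.IsFRS) (w : Mor C) (c : I) : len (pre w c) ≠ len w := by
  intro heq
  obtain ⟨l, hl, hlen⟩ := len_spec w
  obtain ⟨l', hl', hlen'⟩ := len_spec (pre w c)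
  have hpar := realizes_length_parity hC hl' (realizes_pre hl c)
  simp at hpar
  omega

lemma len_pre_cases (hC : C.IsFRS) (w : Mor C) (c : I) :
    len (pre w c) = len w + 1 ∨ len (pre w c) + 1 = len w := by
  have h1 := len_pre_le w c
  have h2 := len_le_pre w c
  have h3 := len_pre_ne hC w c
  omega

end CartanScheme
namespace CartanScheme

variable {I A : Type} [Fintype I] [DecidableEq I] [Fintype A] [Nonempty A] [DecidableEq A]
variable {C : CartanScheme I A}

/-! ### Rank-two (plane) theory -/

/-- Vectors supported on `{s,t}`. -/
def PlaneV (s t : I) (v : I → ℤ) : Prop := ∀ k, k ≠ s → k ≠ t → v k = 0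

/-- Words with letters in `{s,t}`. -/
def PlaneW (s t : I) (l : List I) : Prop := ∀ c ∈ l, c = s ∨ c = t

lemma planeV_neg {s t : I} {v : I → ℤ} (h : PlaneV s t v) : PlaneV s t (-v) := by
  intro k h1 h2; simp [h k h1 h2]

lemma planeV_single_s (s t : I) : PlaneV s t (Pi.single s 1) := by
  intro k h1 _; simp [Pi.single_apply, h1]

lemma planeV_single_t (s t : I) : PlaneV s t (Pi.single t 1) := by
  intro k _ h2; simp [Pi.single_apply, h2]

lemma planeV_single {s t c : I} (h : c = s ∨ c = t) : PlaneV s t (Pi.single c 1) := by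
  rcases h with h | h
  · subst h; exact planeV_single_s _ _
  · subst h; exact planeV_single_t _ _

lemma sigma_planeV {s t : I} (a : A) {c : I} (hc : c = s ∨ c = t) {v : I → ℤ}
    (hv : PlaneV s t v) : PlaneV s t (C.sigma a c v) := by
  intro k h1 h2
  have hkc : k ≠ c := by rcases hc with h | h <;> subst h <;> assumption
  rw [sigma_apply_ne _ hkc]
  exact hv k h1 h2

lemma wordMap_planeV {s t : I} (a : A) {l : List I} (hl : PlaneW s t l) {v : I → ℤ}
    (hv : PlaneV s t v) : PlaneV s t (C.wordMap a l v) := by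
  induction l with
  | nil => exact hv
  | cons c l ih =>
      rw [wordMap_cons]
      exact sigma_planeV _ (hl c ((List.mem_cons_self (a := c) (l := l))))
        (ih (fun d hd => hl d (List.mem_cons_of_mem c hd)))

lemma planeW_reverse {s t : I} {l : List I} (h : PlaneW s t l) : PlaneW s t l.reverse :=
  fun c hc => h c (List.mem_reverse.1 hc)

lemma planeW_cons {s t c : I} {l : List I} (h : PlaneW s t (c :: l)) : PlaneW s t l :=
  fun d hd => h d (List.mem_cons_of_mem c hd)

lemma planeV_expand {s t : I} (hst : s ≠ t) {v : I → ℤ} (hv : PlaneV s t v) :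
    v = v s • (Pi.single s 1 : I → ℤ) + v t • (Pi.single t 1 : I → ℤ) := by
  funext k
  by_cases h1 : k = s
  · subst h1
    simp [Pi.single_apply, hst.symm]
  · by_cases h2 : k = t
    · subst h2
      simp [Pi.single_apply, hst]
    · simp [Pi.single_apply, h1, h2, hv k h1 h2]

/-- Positive plane roots at `x`. -/
def PP (C : CartanScheme I A) (s t : I) (x : A) : Set (I → ℤ) :=
  {α | α ∈ C.roots x ∧ PosV α ∧ PlaneV s t α}

lemma PP_finite (hC : C.IsFRS) (s t : I) (x : A) : (C.PP s t x).Finite :=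
  (hC.1 x).subset (fun _ h => h.1)

lemma single_mem_PP_s (s t : I) (x : A) : (Pi.single s 1 : I → ℤ) ∈ C.PP s t x :=
  ⟨single_mem_roots x s, posV_single s, planeV_single_s s t⟩

lemma single_mem_PP_t (s t : I) (x : A) : (Pi.single t 1 : I → ℤ) ∈ C.PP s t x :=
  ⟨single_mem_roots x t, posV_single t, planeV_single_t s t⟩

/-- Size of the set of positive plane roots. -/
noncomputable def mPP (C : CartanScheme I A) (s t : I) (x : A) : ℕ := (C.PP s t x).ncard

lemma mPP_pos (hC : C.IsFRS) (s t : I) (x : A) : 0 < C.mPP s t x := by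
  rw [mPP, Set.ncard_pos (PP_finite hC s t x)]
  exact ⟨_, single_mem_PP_s s t x⟩

lemma mPP_le_rho (hC : C.IsFRS) (s t : I) (x : A) {c : I} (hc : c = s ∨ c = t) :
    C.mPP s t x ≤ C.mPP s t (C.ρ c x) := by
  classical
  refine Set.ncard_le_ncard_of_injOn
    (fun α => if α = Pi.single c 1 then Pi.single c 1 else C.sigma x c α)
    ?_ ?_ (PP_finite hC s t _)
  · intro α hα
    by_cases h : α = Pi.single c 1
    · simp only [h, if_pos rfl]
      rcases hc with h' | h'
      · subst h'; exact single_mem_PP_s _ _ _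
      · subst h'; exact single_mem_PP_t _ _ _
    · simp only [if_neg h]
      obtain ⟨hroot, hpos, hplane⟩ := hα
      refine ⟨sigma_mem_roots c hroot, ?_, sigma_planeV x hc hplane⟩
      by_contra hneg
      exact h (claimA hC c hroot hpos hneg)
  · intro α hα α' hα' heq
    by_cases h : α = Pi.single c 1 <;> by_cases h' : α' = Pi.single c 1
    · rw [h, h']
    · exfalso
      simp only [if_pos h, if_neg h'] at heq
      have hx : α' = C.sigma (C.ρ c x) c (Pi.single c 1) := by
        rw [heq, sigma_sigma_rho]
      rw [sigma_single_self] at hx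
      have hp := hα'.2.1 c
      rw [hx] at hp
      simp at hp
    · exfalso
      simp only [if_neg h, if_pos h'] at heq
      have hx : α = C.sigma (C.ρ c x) c (Pi.single c 1) := by
        rw [← heq, sigma_sigma_rho]
      rw [sigma_single_self] at hx
      have hp := hα.2.1 c
      rw [hx] at hp
      simp at hp
    · simp only [if_neg h, if_neg h'] at heq
      have h2 := congrArg (C.sigma (C.ρ c x) c) heq
      rwa [sigma_sigma_rho, sigma_sigma_rho] at h2

lemma mPP_rho (hC : C.IsFRS) (s t : I) (x : A) {c : I} (hc : c = s ∨ c = t) :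
    C.mPP s t (C.ρ c x) = C.mPP s t x := by
  have h1 := mPP_le_rho hC s t x hc
  have h2 := mPP_le_rho hC s t (C.ρ c x) hc
  rw [C.ρ_invol] at h2
  omega

lemma mPP_word (hC : C.IsFRS) (s t : I) (x : A) {l : List I} (hl : PlaneW s t l) :
    C.mPP s t (C.wordTarget x l) = C.mPP s t x := by
  induction l with
  | nil => rfl
  | cons c l ih =>
      rw [wordTarget_cons, mPP_rho hC s t _ (hl c ((List.mem_cons_self (a := c) (l := l))))]
      exact ih (planeW_cons hl)

/-- Number of plane inversions. -/
noncomputable def nP (C : CartanScheme I A) (s t : I) (x : A)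
    (f : (I → ℤ) → (I → ℤ)) : ℕ := (C.flipsK (PlaneV s t) x f).ncard

lemma nP_le_mPP (hC : C.IsFRS) (s t : I) (x : A) (f : (I → ℤ) → (I → ℤ)) :
    C.nP s t x f ≤ C.mPP s t x := by
  apply Set.ncard_le_ncard _ (PP_finite hC s t x)
  rintro α ⟨hroot, hpos, hplane, _⟩
  exact ⟨hroot, hpos, hplane⟩

lemma nP_cons_pos (hC : C.IsFRS) {s t : I} (x : A) {l : List I} (hl : PlaneW s t l)
    {j : I} (hj : j = s ∨ j = t)
    (hβ : PosV (C.wordMap (C.wordTarget x l) l.reverse (Pi.single j 1))) :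
    C.nP s t x (C.wordMap x (j :: l)) = C.nP s t x (C.wordMap x l) + 1 := by
  have hK : PlaneV s t (C.wordMap (C.wordTarget x l) l.reverse (Pi.single j 1)) :=
    wordMap_planeV _ (planeW_reverse hl) (planeV_single hj)
  obtain ⟨hset, hnm⟩ := flipsK_cons_pos (C := C) (PlaneV s t) x l j hC hK hβ
  rw [nP, hset, Set.ncard_insert_of_notMem hnm (flipsK_finite hC _ _ _)]
  rfl

lemma nP_cons_neg (hC : C.IsFRS) {s t : I} (x : A) {l : List I} (hl : PlaneW s t l)
    {j : I} (hj : j = s ∨ j = t)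
    (hβ : ¬ PosV (C.wordMap (C.wordTarget x l) l.reverse (Pi.single j 1))) :
    C.nP s t x (C.wordMap x (j :: l)) + 1 = C.nP s t x (C.wordMap x l) := by
  have hK : PlaneV s t (-(C.wordMap (C.wordTarget x l) l.reverse (Pi.single j 1))) :=
    planeV_neg (wordMap_planeV _ (planeW_reverse hl) (planeV_single hj))
  obtain ⟨hset, hm⟩ := flipsK_cons_neg (C := C) (PlaneV s t) x l j hC hK hβ
  rw [nP, hset, Set.ncard_diff_singleton_add_one hm (flipsK_finite hC _ _ _)]
  rfl

lemma nP_le_length (hC : C.IsFRS) {s t : I} (x : A) {l : List I} (hl : PlaneW s t l) :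
    C.nP s t x (C.wordMap x l) ≤ l.length := by
  induction l with
  | nil =>
      rw [show C.nP s t x (C.wordMap x []) = 0 from ?_]
      · exact Nat.zero_le _
      · rw [nP, Set.ncard_eq_zero (flipsK_finite hC _ _ _)]
        ext α; simp only [Set.mem_empty_iff_false, iff_false]
        rintro ⟨_, hpos, _, hnp⟩
        exact hnp hpos
  | cons j l ih =>
      have hj := hl j ((List.mem_cons_self (a := j) (l := l)))
      have hl' := planeW_cons hl
      by_cases hβ : PosV (C.wordMap (C.wordTarget x l) l.reverse (Pi.single j 1))
      · have := nP_cons_pos hC x hl' hj hβ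
        have := ih hl'
        simp only [List.length_cons]; omega
      · have := nP_cons_neg hC x hl' hj hβ
        have := ih hl'
        simp only [List.length_cons]; omega

lemma nP_parity (hC : C.IsFRS) {s t : I} (x : A) {l : List I} (hl : PlaneW s t l) :
    C.nP s t x (C.wordMap x l) % 2 = l.length % 2 := by
  induction l with
  | nil =>
      have h0 : C.nP s t x (C.wordMap x []) = 0 := by
        rw [nP, Set.ncard_eq_zero (flipsK_finite hC _ _ _)]
        ext α; simp only [Set.mem_empty_iff_false, iff_false]
        rintro ⟨_, hpos, _, hnp⟩
        exact hnp hpos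
      simp [h0]
  | cons j l ih =>
      have hj := hl j ((List.mem_cons_self (a := j) (l := l)))
      have hl' := planeW_cons hl
      by_cases hβ : PosV (C.wordMap (C.wordTarget x l) l.reverse (Pi.single j 1))
      · have := nP_cons_pos hC x hl' hj hβ
        have := ih hl'
        simp only [List.length_cons]; omega
      · have := nP_cons_neg hC x hl' hj hβ
        have := ih hl'
        simp only [List.length_cons]; omega

lemma nP_reverse (hC : C.IsFRS) {s t : I} (x : A) {l : List I} (hl : PlaneW s t l) :
    C.nP s t (C.wordTarget x l) (C.wordMap (C.wordTarget x l) l.reverse)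
      = C.nP s t x (C.wordMap x l) :=
  flipsK_reverse_ncard hC (PlaneV s t) (fun _ h => planeV_neg h) x l
    (fun _ h => wordMap_planeV _ hl h)
    (fun _ h => wordMap_planeV _ (planeW_reverse hl) h)

/-- If the two plane columns of a plane word map are positive, there are no plane
inversions. -/
lemma nP_zero_of_cols (hC : C.IsFRS) {s t : I} (hst : s ≠ t) (x : A) {l : List I}
    (hl : PlaneW s t l)
    (hs' : PosV (C.wordMap x l (Pi.single s 1)))
    (ht' : PosV (C.wordMap x l (Pi.single t 1))) :
    C.nP s t x (C.wordMap x l) = 0 := by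
  rw [nP, Set.ncard_eq_zero (flipsK_finite hC _ _ _)]
  ext α; simp only [Set.mem_empty_iff_false, iff_false]
  rintro ⟨hroot, hpos, hplane, hnp⟩
  apply hnp
  have hexp : α = α s • (Pi.single s 1 : I → ℤ) + α t • (Pi.single t 1 : I → ℤ) :=
    planeV_expand hst hplane
  have hmap : C.wordMap x l α
      = α s • C.wordMap x l (Pi.single s 1) + α t • C.wordMap x l (Pi.single t 1) := by
    conv_lhs => rw [hexp]
    rw [wordMap_add, wordMap_smul, wordMap_smul]
  intro k
  rw [hmap]
  simp only [Pi.add_apply, Pi.smul_apply, smul_eq_mul]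
  have h1 := hpos s
  have h2 := hpos t
  have h3 := hs' k
  have h4 := ht' k
  positivity

/-- In the plane, existence of a descent. -/
lemma exists_descent_plane (hC : C.IsFRS) {s t : I} (hst : s ≠ t) (x : A) {l : List I}
    (hl : PlaneW s t l) (hn : 0 < C.nP s t x (C.wordMap x l)) :
    ∃ j, (j = s ∨ j = t) ∧
      ¬ PosV (C.wordMap (C.wordTarget x l) l.reverse (Pi.single j 1)) := by
  by_contra hcon
  push_neg at hcon
  have hs' : PosV (C.wordMap (C.wordTarget x l) l.reverse (Pi.single s 1)) :=
    hcon s (Or.inl rfl)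
  have ht' : PosV (C.wordMap (C.wordTarget x l) l.reverse (Pi.single t 1)) :=
    hcon t (Or.inr rfl)
  have h0 : C.nP s t (C.wordTarget x l) (C.wordMap (C.wordTarget x l) l.reverse) = 0 :=
    nP_zero_of_cols hC hst _ (planeW_reverse hl) hs' ht'
  rw [nP_reverse hC x hl] at h0
  omega

end CartanScheme
namespace CartanScheme

variable {I A : Type} [Fintype I] [DecidableEq I] [Fintype A] [Nonempty A] [DecidableEq A]
variable {C : CartanScheme I A}

/-! ### Plane words without inversions have identity map -/

lemma int_sum_eq_one {P Q : ℤ} (hP : 0 ≤ P) (hQ : 0 ≤ Q) (h : P + Q = 1) :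
    (P = 1 ∧ Q = 0) ∨ (P = 0 ∧ Q = 1) := by omega

lemma int_sum_eq_zero {P Q : ℤ} (hP : 0 ≤ P) (hQ : 0 ≤ Q) (h : P + Q = 0) :
    P = 0 ∧ Q = 0 := by omega

lemma int_mul_eq_one {a b : ℤ} (ha : 0 ≤ a) (h : a * b = 1) : a = 1 ∧ b = 1 := by
  have h1 : a = 1 := Int.eq_one_of_mul_eq_one_right ha h
  refine ⟨h1, ?_⟩
  rw [h1, one_mul] at h
  exact h

/-- Row functional on plane vectors. -/
lemma phi_plane {s t : I} (hst : s ≠ t) (a : A) (i : I) {v : I → ℤ}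
    (hv : PlaneV s t v) : C.phi a i v = C.c a i s * v s + C.c a i t * v t := by
  classical
  rw [phi]
  rw [show (Finset.univ : Finset I) = insert s (insert t (Finset.univ \ {s, t})) from ?_]
  · rw [Finset.sum_insert, Finset.sum_insert]
    · have h0 : ∑ j ∈ Finset.univ \ {s, t}, C.c a i j * v j = 0 := by
        apply Finset.sum_eq_zero
        intro j hj
        simp only [Finset.mem_sdiff, Finset.mem_insert, Finset.mem_singleton] at hj
        push_neg at hj
        rw [hv j hj.2.1 hj.2.2, mul_zero]
      rw [h0, add_zero]
    · simp
    · simp [hst]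
  · ext j
    simp only [Finset.mem_univ, Finset.mem_insert, Finset.mem_sdiff, Finset.mem_singleton,
      true_iff]
    by_cases h1 : j = s
    · left; exact h1
    · by_cases h2 : j = t
      · right; left; exact h2
      · right; right; simp [h1, h2]

lemma posV_col_of_nP_zero (hC : C.IsFRS) {s t : I} (x : A) {l : List I}
    (hl : PlaneW s t l) (h0 : C.nP s t x (C.wordMap x l) = 0) (j : I) :
    PosV (C.wordMap x l (Pi.single j 1)) := by
  have hempty : C.flipsK (PlaneV s t) x (C.wordMap x l) = ∅ :=
    (Set.ncard_eq_zero (flipsK_finite hC _ _ _)).1 h0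
  by_cases hj : j = s ∨ j = t
  · by_contra hneg
    have hmem : (Pi.single j 1 : I → ℤ) ∈ C.flipsK (PlaneV s t) x (C.wordMap x l) :=
      ⟨single_mem_roots x j, posV_single j, planeV_single hj, hneg⟩
    rw [hempty] at hmem
    exact hmem
  · push_neg at hj
    have hjl : j ∉ l := fun hmem => by
      rcases hl j hmem with h | h
      · exact hj.1 h
      · exact hj.2 h
    have hroot : C.wordMap x l (Pi.single j 1) ∈ C.roots (C.wordTarget x l) :=
      wordMap_mem_roots l (single_mem_roots x j)
    rcases pos_or_neg hC hroot with h | h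
    · exact h
    · exfalso
      have := h j
      rw [wordMap_apply_of_not_mem x l _ hjl] at this
      simp at this

/-- Plane determinant of a map. -/
def detp (s t : I) (f : (I → ℤ) → (I → ℤ)) : ℤ :=
  f (Pi.single s 1) s * f (Pi.single t 1) t - f (Pi.single s 1) t * f (Pi.single t 1) s

lemma detp_word (hC : C.IsFRS) {s t : I} (hst : s ≠ t) (x : A) {l : List I}
    (hl : PlaneW s t l) : detp s t (C.wordMap x l) = (-1) ^ l.length := by
  induction l with
  | nil => simp [detp, wordMap_nil, Pi.single_apply, hst, hst.symm]
  | cons c l ih =>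
      have hc := hl c ((List.mem_cons_self (a := c) (l := l)))
      have hl' := planeW_cons hl
      have ihl := ih hl'
      have hplanes : PlaneV s t (C.wordMap x l (Pi.single s 1)) :=
        wordMap_planeV x hl' (planeV_single_s s t)
      have hplanet : PlaneV s t (C.wordMap x l (Pi.single t 1)) :=
        wordMap_planeV x hl' (planeV_single_t s t)
      have hcons : ∀ v, C.wordMap x (c :: l) v
          = C.sigma (C.wordTarget x l) c (C.wordMap x l v) := fun v => rfl
      have hes : ∀ v, PlaneV s t v → C.sigma (C.wordTarget x l) s v s
          = -v s - C.c (C.wordTarget x l) s t * v t := by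
        intro v hv
        rw [sigma_apply_self, phi_plane hst _ _ hv, C.c_diag]
        ring
      have het : ∀ v, C.sigma (C.wordTarget x l) s v t = v t :=
        fun v => sigma_apply_ne _ hst.symm v
      have hes' : ∀ v, C.sigma (C.wordTarget x l) t v s = v s :=
        fun v => sigma_apply_ne _ hst v
      have het' : ∀ v, PlaneV s t v → C.sigma (C.wordTarget x l) t v t
          = -v t - C.c (C.wordTarget x l) t s * v s := by
        intro v hv
        rw [sigma_apply_self, phi_plane hst _ _ hv, C.c_diag]
        ring
      have hstep : detp s t (C.wordMap x (c :: l)) = -(detp s t (C.wordMap x l)) := by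
        simp only [detp, hcons]
        rcases hc with h | h
        · rw [h]
          rw [hes _ hplanes, hes _ hplanet]
          simp only [het]
          ring
        · rw [h]
          rw [het' _ hplanes, het' _ hplanet]
          simp only [hes']
          ring
      rw [hstep, ihl, List.length_cons, pow_succ]
      ring

/-- A plane word without plane inversions has the identity map. -/
lemma plane_map_id (hC : C.IsFRS) {s t : I} (hst : s ≠ t) (x : A) {l : List I}
    (hl : PlaneW s t l) (h0 : C.nP s t x (C.wordMap x l) = 0) :
    C.wordMap x l = id := by
  have hfg : ∀ v, C.wordMap x l (C.wordMap (C.wordTarget x l) l.reverse v) = v :=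
    fun v => C.wordMap_reverse' x l v
  have hgf : ∀ v, C.wordMap (C.wordTarget x l) l.reverse (C.wordMap x l v) = v :=
    fun v => C.wordMap_reverse x l v
  have hg0 : C.nP s t (C.wordTarget x l) (C.wordMap (C.wordTarget x l) l.reverse) = 0 := by
    rw [nP_reverse hC x hl, h0]
  have hfcol : ∀ j, PosV (C.wordMap x l (Pi.single j 1)) := posV_col_of_nP_zero hC x hl h0
  have hgcol : ∀ j, PosV (C.wordMap (C.wordTarget x l) l.reverse (Pi.single j 1)) :=
    posV_col_of_nP_zero hC _ (planeW_reverse hl) hg0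
  have hplanes : PlaneV s t (C.wordMap x l (Pi.single s 1)) :=
    wordMap_planeV x hl (planeV_single_s s t)
  have hplanet : PlaneV s t (C.wordMap x l (Pi.single t 1)) :=
    wordMap_planeV x hl (planeV_single_t s t)
  have hgplanes : PlaneV s t (C.wordMap (C.wordTarget x l) l.reverse (Pi.single s 1)) :=
    wordMap_planeV _ (planeW_reverse hl) (planeV_single_s s t)
  have hgplanet : PlaneV s t (C.wordMap (C.wordTarget x l) l.reverse (Pi.single t 1)) :=
    wordMap_planeV _ (planeW_reverse hl) (planeV_single_t s t)
  have hcompose : ∀ v : I → ℤ, PlaneV s t v →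
      C.wordMap (C.wordTarget x l) l.reverse v
        = v s • C.wordMap (C.wordTarget x l) l.reverse (Pi.single s 1)
          + v t • C.wordMap (C.wordTarget x l) l.reverse (Pi.single t 1) := by
    intro v hv
    conv_lhs => rw [planeV_expand hst hv]
    rw [wordMap_add, wordMap_smul, wordMap_smul]
  -- abbreviations (only for readability of the entry equations)
  have keyS := hgf (Pi.single s 1)
  rw [hcompose _ hplanes] at keyS
  have keyT := hgf (Pi.single t 1)
  rw [hcompose _ hplanet] at keyT
  have evalS := fun (k : I) => congrFun keyS k
  have evalT := fun (k : I) => congrFun keyT k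
  have hsS : (Pi.single s 1 : I → ℤ) s = 1 := by simp
  have hsT : (Pi.single s 1 : I → ℤ) t = 0 := by simp [Pi.single_apply, hst.symm]
  have htS : (Pi.single t 1 : I → ℤ) s = 0 := by simp [Pi.single_apply, hst]
  have htT : (Pi.single t 1 : I → ℤ) t = 1 := by simp
  have eq1 : C.wordMap x l (Pi.single s 1) s
        * C.wordMap (C.wordTarget x l) l.reverse (Pi.single s 1) s
      + C.wordMap x l (Pi.single s 1) t
        * C.wordMap (C.wordTarget x l) l.reverse (Pi.single t 1) s = 1 := by
    have := evalS s
    simpa [Pi.add_apply, Pi.smul_apply, smul_eq_mul, hsS] using this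
  have eq2 : C.wordMap x l (Pi.single s 1) s
        * C.wordMap (C.wordTarget x l) l.reverse (Pi.single s 1) t
      + C.wordMap x l (Pi.single s 1) t
        * C.wordMap (C.wordTarget x l) l.reverse (Pi.single t 1) t = 0 := by
    have := evalS t
    simpa [Pi.add_apply, Pi.smul_apply, smul_eq_mul, hsT] using this
  have eq3 : C.wordMap x l (Pi.single t 1) s
        * C.wordMap (C.wordTarget x l) l.reverse (Pi.single s 1) s
      + C.wordMap x l (Pi.single t 1) t
        * C.wordMap (C.wordTarget x l) l.reverse (Pi.single t 1) s = 0 := by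
    have := evalT s
    simpa [Pi.add_apply, Pi.smul_apply, smul_eq_mul, htS] using this
  have eq4 : C.wordMap x l (Pi.single t 1) s
        * C.wordMap (C.wordTarget x l) l.reverse (Pi.single s 1) t
      + C.wordMap x l (Pi.single t 1) t
        * C.wordMap (C.wordTarget x l) l.reverse (Pi.single t 1) t = 1 := by
    have := evalT t
    simpa [Pi.add_apply, Pi.smul_apply, smul_eq_mul, htT] using this
  set a := C.wordMap x l (Pi.single s 1) s with ha
  set cc := C.wordMap x l (Pi.single s 1) t with hcc
  set b := C.wordMap x l (Pi.single t 1) s with hb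
  set d := C.wordMap x l (Pi.single t 1) t with hd
  set a' := C.wordMap (C.wordTarget x l) l.reverse (Pi.single s 1) s with ha'
  set c' := C.wordMap (C.wordTarget x l) l.reverse (Pi.single s 1) t with hc'
  set b' := C.wordMap (C.wordTarget x l) l.reverse (Pi.single t 1) s with hb'
  set d' := C.wordMap (C.wordTarget x l) l.reverse (Pi.single t 1) t with hd'
  have la : 0 ≤ a := hfcol s s
  have lc : 0 ≤ cc := hfcol s t
  have lb : 0 ≤ b := hfcol t s
  have ld : 0 ≤ d := hfcol t t
  have la' : 0 ≤ a' := hgcol s s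
  have lc' : 0 ≤ c' := hgcol s t
  have lb' : 0 ≤ b' := hgcol t s
  have ld' : 0 ≤ d' := hgcol t t
  have hdet : a * d - cc * b = 1 := by
    have h1 := detp_word hC hst x hl
    have h2 := nP_parity hC x hl
    rw [h0] at h2
    have hpow : (-1 : ℤ) ^ l.length = 1 := by
      rw [show l.length = 2 * (l.length / 2) from by omega, pow_mul]
      norm_num
    rw [hpow] at h1
    rw [detp] at h1
    rw [← ha, ← hcc, ← hb, ← hd] at h1
    linarith
  have hsplit2 := int_sum_eq_zero (mul_nonneg la lc') (mul_nonneg lc ld') eq2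
  have hsplit3 := int_sum_eq_zero (mul_nonneg lb la') (mul_nonneg ld lb') eq3
  have hcase := int_sum_eq_one (mul_nonneg la la') (mul_nonneg lc lb') eq1
  have hentries : a = 1 ∧ b = 0 ∧ cc = 0 ∧ d = 1 ∧ a' = 1 ∧ b' = 0 ∧ c' = 0 ∧ d' = 1 := by
    rcases hcase with ⟨h11, h10⟩ | ⟨h10, h11⟩
    · obtain ⟨ha1, ha'1⟩ := int_mul_eq_one la h11
      have hb0 : b = 0 := by
        have := hsplit3.1
        rw [ha'1, mul_one] at this
        exact this
      have hd1 : d = 1 := by rw [ha1, hb0] at hdet; linarith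
      have hc'0 : c' = 0 := by
        have := hsplit2.1
        rw [ha1, one_mul] at this
        exact this
      have hd'1 : d' = 1 := by
        rw [hc'0, mul_zero, zero_add, hd1, one_mul] at eq4
        exact eq4
      have hc0 : cc = 0 := by
        have := hsplit2.2
        rw [hd'1, mul_one] at this
        exact this
      have hb'0 : b' = 0 := by
        have := hsplit3.2
        rw [hd1, one_mul] at this
        exact this
      exact ⟨ha1, hb0, hc0, hd1, ha'1, hb'0, hc'0, hd'1⟩
    · exfalso
      obtain ⟨hc1, hb'1⟩ := int_mul_eq_one lc h11
      have hd0 : d = 0 := by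
        have := hsplit3.2
        rw [hb'1, mul_one] at this
        exact this
      rw [hd0, mul_zero, hc1, one_mul] at hdet
      linarith
  obtain ⟨ha1, hb0, hc0, hd1, ha'1, hb'0, hc'0, hd'1⟩ := hentries
  -- the plane columns are the identity
  have hfs : C.wordMap x l (Pi.single s 1) = Pi.single s 1 := by
    rw [planeV_expand hst hplanes, ← ha, ← hcc, ha1, hc0]
    simp
  have hft : C.wordMap x l (Pi.single t 1) = Pi.single t 1 := by
    rw [planeV_expand hst hplanet, ← hb, ← hd, hb0, hd1]
    simp
  have hgs : C.wordMap (C.wordTarget x l) l.reverse (Pi.single s 1) = Pi.single s 1 := by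
    rw [planeV_expand hst hgplanes, ← ha', ← hc', ha'1, hc'0]
    simp
  have hgt : C.wordMap (C.wordTarget x l) l.reverse (Pi.single t 1) = Pi.single t 1 := by
    rw [planeV_expand hst hgplanet, ← hb', ← hd', hb'0, hd'1]
    simp
  -- all columns are the identity
  have hfr : ∀ r, C.wordMap x l (Pi.single r 1) = Pi.single r 1 := by
    intro r
    by_cases hr : r = s ∨ r = t
    · rcases hr with h | h
      · subst h; exact hfs
      · subst h; exact hft
    · push_neg at hr
      obtain ⟨hrs, hrt⟩ := hr
      have hrl : r ∉ l := fun hmem => by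
        rcases hl r hmem with h | h
        · exact hrs h
        · exact hrt h
      have hudec : C.wordMap x l (Pi.single r 1) = Pi.single r 1
          + (C.wordMap x l (Pi.single r 1) s) • Pi.single s 1
          + (C.wordMap x l (Pi.single r 1) t) • Pi.single t 1 := by
        funext k
        simp only [Pi.add_apply, Pi.smul_apply, smul_eq_mul]
        by_cases h1 : k = s
        · subst h1
          rw [hsS]
          simp [Pi.single_apply, Ne.symm hrs, hst.symm]
        · by_cases h2 : k = t
          · subst h2
            rw [htT]
            simp [Pi.single_apply, Ne.symm hrt, hst]
          · have hkl : k ∉ l := fun hmem => by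
              rcases hl k hmem with h | h
              · exact h1 h
              · exact h2 h
            rw [wordMap_apply_of_not_mem x l _ hkl]
            simp [Pi.single_apply, h1, h2]
      have hkey : C.wordMap (C.wordTarget x l) l.reverse (C.wordMap x l (Pi.single r 1))
          = Pi.single r 1 := hgf _
      rw [hudec] at hkey
      rw [wordMap_add, wordMap_add, wordMap_smul, wordMap_smul, hgs, hgt] at hkey
      have hks := congrFun hkey s
      have hkt := congrFun hkey t
      simp only [Pi.add_apply, Pi.smul_apply, smul_eq_mul, hsS, hsT, htS, htT] at hks hkt
      have hg1 := hgcol r s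
      have hg2 := hgcol r t
      have hu1 := hfcol r s
      have hu2 := hfcol r t
      have hrs' : (Pi.single r 1 : I → ℤ) s = 0 := by
        simp [Pi.single_apply, Ne.symm hrs]
      have hrt' : (Pi.single r 1 : I → ℤ) t = 0 := by
        simp [Pi.single_apply, Ne.symm hrt]
      rw [hrs'] at hks
      rw [hrt'] at hkt
      have hus : C.wordMap x l (Pi.single r 1) s = 0 := by linarith
      have hut : C.wordMap x l (Pi.single r 1) t = 0 := by linarith
      rw [hudec, hus, hut]
      simp
  -- conclude
  funext v
  show C.wordMap x l v = v
  calc C.wordMap x l v = ∑ k, v k • C.wordMap x l (Pi.single k 1) := wordMap_expand x l v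
    _ = ∑ k, v k • (Pi.single k 1 : I → ℤ) := by
        apply Finset.sum_congr rfl
        intro k _
        rw [hfr k]
    _ = v := (vec_expand v).symm

end CartanScheme
namespace CartanScheme

variable {I A : Type} [Fintype I] [DecidableEq I] [Fintype A] [Nonempty A] [DecidableEq A]
variable {C : CartanScheme I A}

/-! ### Cancelling adjacent equal letters -/

lemma cancel_pair (x : A) (q₁ q₂ : List I) (c : I) :
    C.wordTarget x (q₁ ++ c :: c :: q₂) = C.wordTarget x (q₁ ++ q₂) ∧
    C.wordMap x (q₁ ++ c :: c :: q₂) = C.wordMap x (q₁ ++ q₂) := by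
  have htgt : C.wordTarget x (c :: c :: q₂) = C.wordTarget x q₂ := by
    rw [wordTarget_cons, wordTarget_cons, C.ρ_invol]
  have hmap : C.wordMap x (c :: c :: q₂) = C.wordMap x q₂ := by
    funext v
    rw [wordMap_cons, wordMap_cons, wordTarget_cons]
    exact sigma_sigma_rho _ c _
  constructor
  · rw [C.wordTarget_append, C.wordTarget_append, htgt]
  · rw [C.wordMap_append, C.wordMap_append, htgt, hmap]

lemma adjacent_or_chain : ∀ (q : List I),
    (∃ q₁ q₂ c, q = q₁ ++ c :: c :: q₂) ∨ q.Chain' (· ≠ ·) := by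
  intro q
  induction q with
  | nil => exact Or.inr List.isChain_nil
  | cons a q ih =>
      rcases ih with ⟨q₁, q₂, c, rfl⟩ | hch
      · exact Or.inl ⟨a :: q₁, q₂, c, rfl⟩
      · cases q with
        | nil => exact Or.inr (List.isChain_singleton a)
        | cons b q' =>
            by_cases hab : a = b
            · subst hab
              exact Or.inl ⟨[], q', a, rfl⟩
            · exact Or.inr (List.isChain_cons_cons.2 ⟨hab, hch⟩)

/-! ### Alternating words and the object axiom (R4) -/

/-- `rep a b r` is the alternating word `a b a b ⋯` of length `2r`. -/
def rep (a b : I) : ℕ → List I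
  | 0 => []
  | r + 1 => a :: b :: rep a b r

lemma rep_length (a b : I) (r : ℕ) : (rep a b r).length = 2 * r := by
  induction r with
  | zero => rfl
  | succ r ih => simp [rep, ih]; omega

lemma alt_normal {s t : I} (hst : s ≠ t) :
    ∀ (r : ℕ) (B : List I), (∀ c ∈ B, c = s ∨ c = t) → B.Chain' (· ≠ ·) →
      B.length = 2 * r → B = rep s t r ∨ B = rep t s r := by
  intro r
  induction r with
  | zero =>
      intro B _ _ hlen
      left
      rw [List.length_eq_zero_iff] at hlen
      exact hlen
  | succ r ih =>
      intro B hB hch hlen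
      match B, hlen with
      | c₁ :: c₂ :: B', hlen =>
        have h12 : c₁ ≠ c₂ := (List.isChain_cons_cons.1 hch).1
        have hch2 : (c₂ :: B').Chain' (· ≠ ·) := (List.isChain_cons_cons.1 hch).2
        have hchB' : B'.Chain' (· ≠ ·) := (List.isChain_cons.1 hch2).2
        have hB' : ∀ c ∈ B', c = s ∨ c = t := fun c hc =>
          hB c (List.mem_cons_of_mem _ (List.mem_cons_of_mem _ hc))
        have hlen' : B'.length = 2 * r := by
          simp only [List.length_cons] at hlen
          omega
        have h1 := hB c₁ ((List.mem_cons_self (a := _) (l := _)))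
        have hhead : ∀ d, B'.head? = some d → d ≠ c₂ := by
          intro d hd
          have := (List.isChain_cons.1 hch2).1 d hd
          exact fun h => this h.symm
        rcases h1 with h1 | h1
        · have h2 : c₂ = t := by
            rcases hB c₂ (List.mem_cons_of_mem _ ((List.mem_cons_self (a := _) (l := _)))) with h | h
            · exact absurd (h1.trans h.symm) h12
            · exact h
          left
          have hB'' : B' = rep s t r := by
            rcases ih B' hB' hchB' hlen' with h | h
            · exact h
            · cases r with
              | zero => rw [h]; rfl
              | succ r' =>
                  exfalso
                  have hh : B'.head? = some t := by rw [h]; rfl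
                  exact hhead t hh h2.symm
          rw [rep, h1, h2, hB'']
        · have h2 : c₂ = s := by
            rcases hB c₂ (List.mem_cons_of_mem _ ((List.mem_cons_self (a := _) (l := _)))) with h | h
            · exact h
            · exact absurd (h1.trans h.symm) h12
          right
          have hB'' : B' = rep t s r := by
            rcases ih B' hB' hchB' hlen' with h | h
            · cases r with
              | zero => rw [h]; rfl
              | succ r' =>
                  exfalso
                  have hh : B'.head? = some s := by rw [h]; rfl
                  exact hhead s hh h2.symm
            · exact h
          rw [rep, h1, h2, hB'']

lemma wordTarget_rep (x : A) (a b : I) (r : ℕ) :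
    C.wordTarget x (rep a b r) = (fun y => C.ρ a (C.ρ b y))^[r] x := by
  induction r with
  | zero => rfl
  | succ r ih =>
      rw [rep, wordTarget_cons, wordTarget_cons, ih, Function.iterate_succ_apply']

/-- Quadrant roots are exactly the positive plane roots. -/
lemma quadrant_eq_PP (hC : C.IsFRS) {s t : I} (hst : s ≠ t) (x : A) {a b : I}
    (hab : (a = s ∧ b = t) ∨ (a = t ∧ b = s)) :
    C.roots x ∩ {α | ∃ m n : ℕ, α = (m : ℤ) • Pi.single a 1 + (n : ℤ) • Pi.single b 1}
      = C.PP s t x := by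
  ext α
  constructor
  · rintro ⟨hroot, m, n, hα⟩
    refine ⟨hroot, ?_, ?_⟩
    · intro k
      rw [hα]
      simp only [Pi.add_apply, Pi.smul_apply, smul_eq_mul]
      have h1 : (0:ℤ) ≤ (Pi.single a 1 : I → ℤ) k := by
        by_cases h : k = a <;> simp [Pi.single_apply, h]
      have h2 : (0:ℤ) ≤ (Pi.single b 1 : I → ℤ) k := by
        by_cases h : k = b <;> simp [Pi.single_apply, h]
      positivity
    · intro k h1 h2
      have hka : k ≠ a := by rcases hab with ⟨h, _⟩ | ⟨h, _⟩ <;> subst h <;> assumption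
      have hkb : k ≠ b := by rcases hab with ⟨_, h⟩ | ⟨_, h⟩ <;> subst h <;> assumption
      rw [hα]
      simp [Pi.single_apply, hka, hkb]
  · rintro ⟨hroot, hpos, hplane⟩
    refine ⟨hroot, (α a).toNat, (α b).toNat, ?_⟩
    have hsab : α a = ((α a).toNat : ℤ) := by
      have := hpos a
      omega
    have hsbb : α b = ((α b).toNat : ℤ) := by
      have := hpos b
      omega
    have hexp2 : α = α a • (Pi.single a 1 : I → ℤ) + α b • (Pi.single b 1 : I → ℤ) := by
      rcases hab with ⟨h1, h2⟩ | ⟨h1, h2⟩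
      · rw [h1, h2]
        exact planeV_expand hst hplane
      · rw [h1, h2, add_comm]
        exact planeV_expand hst hplane
    rw [← hsab, ← hsbb, ← hexp2]

/-- An alternating plane word of length `2·|PP|` returns to its source object. -/
lemma alt_block_target (hC : C.IsFRS) {s t : I} (hst : s ≠ t) (x : A) {B : List I}
    (hB : PlaneW s t B) (hch : B.Chain' (· ≠ ·)) (hlen : B.length = 2 * C.mPP s t x) :
    C.wordTarget x B = x := by
  rcases alt_normal hst (C.mPP s t x) B hB hch hlen with h | h
  · subst h
    rw [wordTarget_rep]
    have hmm : C.mPP s t x = (C.roots x ∩ {α | ∃ m n : ℕ,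
        α = (m : ℤ) • Pi.single s 1 + (n : ℤ) • Pi.single t 1}).ncard := by
      rw [quadrant_eq_PP hC hst x (Or.inl ⟨rfl, rfl⟩)]
      rfl
    rw [hmm]
    exact hC.2.2.2 x s t hst
  · subst h
    rw [wordTarget_rep]
    have hmm : C.mPP s t x = (C.roots x ∩ {α | ∃ m n : ℕ,
        α = (m : ℤ) • Pi.single t 1 + (n : ℤ) • Pi.single s 1}).ncard := by
      rw [quadrant_eq_PP hC hst x (Or.inr ⟨rfl, rfl⟩)]
      rfl
    rw [hmm]
    exact hC.2.2.2 x t s hst.symm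

end CartanScheme
namespace CartanScheme

variable {I A : Type} [Fintype I] [DecidableEq I] [Fintype A] [Nonempty A] [DecidableEq A]
variable {C : CartanScheme I A}

lemma nP_nil (hC : C.IsFRS) (s t : I) (x : A) : C.nP s t x (C.wordMap x []) = 0 := by
  rw [nP, Set.ncard_eq_zero (flipsK_finite hC _ _ _)]
  ext α; simp only [Set.mem_empty_iff_false, iff_false]
  rintro ⟨_, hpos, _, hnp⟩
  exact hnp hpos

/-- The sawtooth argument: an alternating plane word with identity map returns to its
source object. -/
lemma plane_alt_obj (hC : C.IsFRS) {s t : I} (hst : s ≠ t) :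
    ∀ (N : ℕ) (x : A) (W : List I), PlaneW s t W → W.Chain' (· ≠ ·) → W.length = N →
      C.wordMap x W = id → C.wordTarget x W = x := by
  intro N
  induction N using Nat.strong_induction_on with
  | _ N IH =>
  intro x W hW hch hlen hid
  by_cases hN0 : N = 0
  · subst hN0
    rw [List.length_eq_zero_iff.1 hlen]
    rfl
  have hNpos : 0 < N := Nat.pos_of_ne_zero hN0
  set m := C.mPP s t x with hm
  have hm1 : 1 ≤ m := by
    have := mPP_pos hC s t x
    omega
  -- per-step structure
  have hkey : ∀ j, j < N → W.drop (N - (j+1)) = W.getD (N - j - 1) s :: W.drop (N - j) := by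
    intro j hj
    have h1 : N - j - 1 < W.length := by omega
    have h2 := List.drop_eq_getElem_cons (l := W) (i := N - j - 1) h1
    have h4 : N - j - 1 + 1 = N - j := by omega
    rw [h4] at h2
    have h3 : N - (j+1) = N - j - 1 := by omega
    rw [h3, h2, List.getD_eq_getElem W s h1]
  have hcmem : ∀ j, j < N → (W.getD (N - j - 1) s = s ∨ W.getD (N - j - 1) s = t) := by
    intro j hj
    have h1 : N - j - 1 < W.length := by omega
    rw [List.getD_eq_getElem W s h1]
    exact hW _ (List.getElem_mem h1)
  have hplane_suf : ∀ j, PlaneW s t (W.drop (N - j)) :=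
    fun j c hc => hW c (List.mem_of_mem_drop hc)
  have hadj : ∀ j, j + 1 < N → W.getD (N - (j+1) - 1) s ≠ W.getD (N - j - 1) s := by
    intro j hj
    have e1 : N - (j+1) - 1 = N - j - 2 := by omega
    have e2 : N - j - 1 = N - j - 2 + 1 := by omega
    rw [e1, e2]
    have h1 : N - j - 2 + 1 < W.length := by omega
    have h2 : N - j - 2 < W.length := by omega
    rw [List.getD_eq_getElem W s h2, List.getD_eq_getElem W s h1]
    have h3 := (List.isChain_iff_getElem.1 hch) (N - j - 2) (by omega)
    simpa [List.get_eq_getElem] using h3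
  set d : ℕ → (I → ℤ) := fun j =>
    C.wordMap (C.wordTarget x (W.drop (N - j))) (W.drop (N - j)).reverse
      (Pi.single (W.getD (N - j - 1) s) 1) with hd
  set nn : ℕ → ℕ := fun j => C.nP s t x (C.wordMap x (W.drop (N - j))) with hnn
  have hup : ∀ j, j < N → PosV (d j) → nn (j+1) = nn j + 1 := by
    intro j hj hp
    simp only [hnn]
    rw [hkey j hj]
    exact nP_cons_pos hC x (hplane_suf j) (hcmem j hj) (by simpa [hd] using hp)
  have hdown : ∀ j, j < N → ¬ PosV (d j) → nn (j+1) + 1 = nn j := by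
    intro j hj hp
    simp only [hnn]
    rw [hkey j hj]
    exact nP_cons_neg hC x (hplane_suf j) (hcmem j hj) (by simpa [hd] using hp)
  have hdroot : ∀ j, d j ∈ C.roots x := by
    intro j
    have h1 : (Pi.single (W.getD (N - j - 1) s) 1 : I → ℤ)
        ∈ C.roots (C.wordTarget x (W.drop (N - j))) := single_mem_roots _ _
    have h2 := wordMap_mem_roots (C := C) (W.drop (N - j)).reverse h1
    rw [C.wordTarget_reverse] at h2
    simpa [hd] using h2
  have hneg_rel : ∀ j, j < N →
      C.wordMap (C.wordTarget x (W.drop (N - (j+1)))) (W.drop (N - (j+1))).reverse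
        (Pi.single (W.getD (N - j - 1) s) 1) = -(d j) := by
    intro j hj
    rw [hkey j hj]
    rw [List.reverse_cons, wordTarget_cons, C.wordMap_append, Function.comp_apply]
    rw [wordTarget_singleton, C.ρ_invol, wordMap_singleton, sigma_single_self, wordMap_neg]
  have cover : ∀ j, j + 1 < N → ∀ (P : I → Prop),
      P (W.getD (N - (j+1) - 1) s) → P (W.getD (N - j - 1) s) → (P s ∧ P t) := by
    intro j hj P h1 h2
    rcases hcmem (j+1) (by omega) with ha | ha <;> rcases hcmem j (by omega) with hb | hb
    · exact absurd (ha.trans hb.symm) (hadj j hj)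
    · exact ⟨ha ▸ h1, hb ▸ h2⟩
    · exact ⟨hb ▸ h2, ha ▸ h1⟩
    · exact absurd (ha.trans hb.symm) (hadj j hj)
  have rule_du : ∀ j, j + 1 < N → ¬ PosV (d j) → PosV (d (j+1)) → nn (j+1) = 0 := by
    intro j hj hnd hpd
    have hdjneg : NegV (d j) := neg_of_not_pos hC (hdroot j) hnd
    have hcolprev : PosV (C.wordMap (C.wordTarget x (W.drop (N - (j+1))))
        (W.drop (N - (j+1))).reverse (Pi.single (W.getD (N - j - 1) s) 1)) := by
      rw [hneg_rel j (by omega)]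
      exact posV_neg_iff.2 hdjneg
    have hcolcur : PosV (C.wordMap (C.wordTarget x (W.drop (N - (j+1))))
        (W.drop (N - (j+1))).reverse (Pi.single (W.getD (N - (j+1) - 1) s) 1)) := by
      simpa [hd] using hpd
    have hcols := cover j hj (fun u => PosV (C.wordMap (C.wordTarget x (W.drop (N - (j+1))))
        (W.drop (N - (j+1))).reverse (Pi.single u 1))) hcolcur hcolprev
    have h0 : C.nP s t (C.wordTarget x (W.drop (N - (j+1))))
        (C.wordMap (C.wordTarget x (W.drop (N - (j+1)))) (W.drop (N - (j+1))).reverse) = 0 :=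
      nP_zero_of_cols hC hst _ (planeW_reverse (hplane_suf (j+1))) hcols.1 hcols.2
    rw [nP_reverse hC x (hplane_suf (j+1))] at h0
    simpa [hnn] using h0
  have rule_ud : ∀ j, j + 1 < N → PosV (d j) → ¬ PosV (d (j+1)) → nn (j+1) = m := by
    intro j hj hpd hnd
    have hcolprev : NegV (C.wordMap (C.wordTarget x (W.drop (N - (j+1))))
        (W.drop (N - (j+1))).reverse (Pi.single (W.getD (N - j - 1) s) 1)) := by
      rw [hneg_rel j (by omega)]
      intro k
      have := hpd k
      simp only [Pi.neg_apply]
      omega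
    have hdj1root : d (j+1) ∈ C.roots x := hdroot (j+1)
    have hcolcur : NegV (C.wordMap (C.wordTarget x (W.drop (N - (j+1))))
        (W.drop (N - (j+1))).reverse (Pi.single (W.getD (N - (j+1) - 1) s) 1)) := by
      have := neg_of_not_pos hC hdj1root (by simpa [hd] using hnd)
      simpa [hd] using this
    have hcols := cover j hj (fun u => NegV (C.wordMap (C.wordTarget x (W.drop (N - (j+1))))
        (W.drop (N - (j+1))).reverse (Pi.single u 1))) hcolcur hcolprev
    -- all positive plane roots at the suffix target are flipped by the reverse map
    have hset : C.flipsK (PlaneV s t) (C.wordTarget x (W.drop (N - (j+1))))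
        (C.wordMap (C.wordTarget x (W.drop (N - (j+1)))) (W.drop (N - (j+1))).reverse)
          = C.PP s t (C.wordTarget x (W.drop (N - (j+1)))) := by
      ext α
      constructor
      · rintro ⟨hroot, hpos, hplane, _⟩
        exact ⟨hroot, hpos, hplane⟩
      · rintro ⟨hroot, hpos, hplane⟩
        refine ⟨hroot, hpos, hplane, ?_⟩
        have hgα : C.wordMap (C.wordTarget x (W.drop (N - (j+1)))) (W.drop (N - (j+1))).reverse α
            = α s • C.wordMap (C.wordTarget x (W.drop (N - (j+1)))) (W.drop (N - (j+1))).reverse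
                (Pi.single s 1)
              + α t • C.wordMap (C.wordTarget x (W.drop (N - (j+1)))) (W.drop (N - (j+1))).reverse
                (Pi.single t 1) := by
          conv_lhs => rw [planeV_expand hst hplane]
          rw [wordMap_add, wordMap_smul, wordMap_smul]
        have hroot2 : C.wordMap (C.wordTarget x (W.drop (N - (j+1)))) (W.drop (N - (j+1))).reverse α
            ∈ C.roots (C.wordTarget (C.wordTarget x (W.drop (N - (j+1))))
                (W.drop (N - (j+1))).reverse) := wordMap_mem_roots _ hroot
        apply not_pos_of_neg_root hC hroot2
        intro k
        rw [hgα]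
        simp only [Pi.add_apply, Pi.smul_apply, smul_eq_mul]
        have h1 := hpos s
        have h2 := hpos t
        have h3 := hcols.1 k
        have h4 := hcols.2 k
        nlinarith
    have h0 : nn (j+1) = (C.PP s t (C.wordTarget x (W.drop (N - (j+1))))).ncard := by
      have := nP_reverse hC x (hplane_suf (j+1))
      simp only [hnn]
      rw [← this, nP, hset]
    rw [h0]
    have := mPP_word hC s t x (hplane_suf (j+1))
    rw [hm]
    exact this
  -- zeroth and last values
  have hnn0 : nn 0 = 0 := by
    simp only [hnn, Nat.sub_zero]
    rw [← hlen, List.drop_length]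
    exact nP_nil hC s t x
  have hnnN : nn N = 0 := by
    simp only [hnn, Nat.sub_self, List.drop_zero]
    rw [hid]
    exact nP_nil hC s t x
  have hbound : ∀ j, nn j ≤ m := by
    intro j
    simp only [hnn]
    rw [hm]
    exact nP_le_mPP hC s t x _
  -- the sawtooth walk
  have walk : ∀ r, r ≤ 2 * m → r ≤ N →
      (r ≤ m → nn r = r) ∧ (m ≤ r → nn r = 2 * m - r) := by
    intro r
    induction r using Nat.strong_induction_on with
    | _ r IHr =>
    intro hr2m hrN
    match r with
    | 0 =>
        constructor
        · intro _
          simpa using hnn0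
        · intro h
          have h0 := hnn0
          omega
    | 1 =>
        have hup1 : nn 1 = 1 := by
          by_cases hp : PosV (d 0)
          · have h1' : nn 1 = nn 0 + 1 := hup 0 (by omega) hp
            omega
          · have h1' : nn 1 + 1 = nn 0 := hdown 0 (by omega) hp
            omega
        constructor <;> intro h <;> omega
    | (k+2) =>
        obtain ⟨h0a, h0b⟩ := IHr k (by omega) (by omega) (by omega)
        obtain ⟨h1a, h1b⟩ := IHr (k+1) (by omega) (by omega) (by omega)
        have hk2N : k + 1 < N := by omega
        have hv0 : (k ≤ m ∧ nn k = k) ∨ (m ≤ k ∧ nn k = 2 * m - k) := by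
          rcases Nat.le_total k m with h | h
          · exact Or.inl ⟨h, h0a h⟩
          · exact Or.inr ⟨h, h0b h⟩
        have hv1 : (k+1 ≤ m ∧ nn (k+1) = k+1) ∨ (m ≤ k+1 ∧ nn (k+1) = 2 * m - (k+1)) := by
          rcases Nat.le_total (k+1) m with h | h
          · exact Or.inl ⟨h, h1a h⟩
          · exact Or.inr ⟨h, h1b h⟩
        by_cases hcase : nn (k+1) = m
        · have hnotpos : ¬ PosV (d (k+1)) := by
            intro hp
            have hthis : nn (k+2) = nn (k+1) + 1 := hup (k+1) hk2N hp
            have := hbound (k+2)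
            omega
          have hd2 : nn (k+2) + 1 = nn (k+1) := hdown (k+1) hk2N hnotpos
          rcases hv1 with ⟨h1l, h1r⟩ | ⟨h1l, h1r⟩ <;> constructor <;> intro h <;> omega
        · by_cases hdir : nn (k+1) = nn k + 1
          · have hpdk : PosV (d k) := by
              by_contra hq
              have := hdown k (by omega) hq
              omega
            have hpdk1 : PosV (d (k+1)) := by
              by_contra hq
              exact hcase (rule_ud k hk2N hpdk hq)
            have hv : nn (k+2) = nn (k+1) + 1 := hup (k+1) hk2N hpdk1
            rcases hv0 with ⟨h0l, h0r⟩ | ⟨h0l, h0r⟩ <;>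
              rcases hv1 with ⟨h1l, h1r⟩ | ⟨h1l, h1r⟩ <;>
              constructor <;> intro h <;> omega
          · have hndk : ¬ PosV (d k) := by
              intro hp
              exact hdir (hup k (by omega) hp)
            have hdk := hdown k (by omega) hndk
            have hnz : nn (k+1) ≠ 0 := by
              rcases hv1 with ⟨h1l, h1r⟩ | ⟨h1l, h1r⟩ <;> omega
            have hndk1 : ¬ PosV (d (k+1)) := by
              intro hp
              exact hnz (rule_du k hk2N hndk hp)
            have hv : nn (k+2) + 1 = nn (k+1) := hdown (k+1) hk2N hndk1
            rcases hv0 with ⟨h0l, h0r⟩ | ⟨h0l, h0r⟩ <;>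
              rcases hv1 with ⟨h1l, h1r⟩ | ⟨h1l, h1r⟩ <;>
              constructor <;> intro h <;> omega
  -- length is a multiple of the period; peel one block
  have hN2m : 2 * m ≤ N := by
    by_contra hlt
    push_neg at hlt
    obtain ⟨w1, w2⟩ := walk N (by omega) le_rfl
    rcases Nat.le_total N m with h | h
    · have := w1 h
      omega
    · have := w2 h
      omega
  have hB0 : nn (2*m) = 0 := by
    obtain ⟨_, w2⟩ := walk (2*m) le_rfl (by omega)
    have := w2 (by omega)
    omega
  have hBplane := hplane_suf (2*m)
  have hBmap : C.wordMap x (W.drop (N - 2*m)) = id := by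
    apply plane_map_id hC hst x hBplane
    simpa [hnn] using hB0
  have hBlen : (W.drop (N - 2*m)).length = 2 * m := by
    rw [List.length_drop]
    omega
  have hBchain : (W.drop (N - 2*m)).Chain' (· ≠ ·) :=
    hch.suffix (List.drop_suffix _ _)
  have hBtgt : C.wordTarget x (W.drop (N - 2*m)) = x := by
    apply alt_block_target hC hst x hBplane hBchain
    rw [hBlen, hm]
  have hsplit : W.take (N - 2*m) ++ W.drop (N - 2*m) = W := List.take_append_drop _ _
  have hmap' : C.wordMap x (W.take (N - 2*m)) = id := by
    funext v
    have h2 : C.wordMap x (W.take (N - 2*m) ++ W.drop (N - 2*m)) v = v := by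
      rw [hsplit, hid]
      rfl
    rw [C.wordMap_append, hBtgt, hBmap] at h2
    exact h2
  have htake_plane : PlaneW s t (W.take (N - 2*m)) :=
    fun c hc => hW c (List.mem_of_mem_take hc)
  have htake_chain : (W.take (N - 2*m)).Chain' (· ≠ ·) :=
    hch.prefix (List.take_prefix _ _)
  have htake_len : (W.take (N - 2*m)).length = N - 2*m := by
    rw [List.length_take]
    omega
  have hrec := IH (N - 2*m) (by omega) x (W.take (N - 2*m)) htake_plane htake_chain
    htake_len hmap'
  calc C.wordTarget x W = C.wordTarget x (W.take (N - 2*m) ++ W.drop (N - 2*m)) := by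
        rw [hsplit]
    _ = C.wordTarget (C.wordTarget x (W.drop (N - 2*m))) (W.take (N - 2*m)) :=
        C.wordTarget_append _ _ _
    _ = C.wordTarget x (W.take (N - 2*m)) := by rw [hBtgt]
    _ = x := hrec

/-- A plane word with identity map returns to its source object. -/
lemma plane_obj (hC : C.IsFRS) {s t : I} (hst : s ≠ t) :
    ∀ (N : ℕ) (x : A) (q : List I), PlaneW s t q → q.length = N →
      C.wordMap x q = id → C.wordTarget x q = x := by
  intro N
  induction N using Nat.strong_induction_on with
  | _ N IH =>
  intro x q hq hlen hid
  rcases adjacent_or_chain q with ⟨q₁, q₂, c, rfl⟩ | hch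
  · obtain ⟨htgt, hmap⟩ := cancel_pair (C := C) x q₁ q₂ c
    have hq' : PlaneW s t (q₁ ++ q₂) := by
      intro u hu
      apply hq u
      rcases List.mem_append.1 hu with h | h
      · exact List.mem_append.2 (Or.inl h)
      · exact List.mem_append.2 (Or.inr (List.mem_cons_of_mem _ (List.mem_cons_of_mem _ h)))
    have hlen' : (q₁ ++ q₂).length < N := by
      rw [← hlen]
      simp
    have hid' : C.wordMap x (q₁ ++ q₂) = id := by rw [← hmap, hid]
    rw [htgt]
    exact IH (q₁ ++ q₂).length hlen' x (q₁ ++ q₂) hq' rfl hid'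
  · exact plane_alt_obj hC hst N x q hq hch hlen hid

end CartanScheme
namespace CartanScheme

variable {I A : Type} [Fintype I] [DecidableEq I] [Fintype A] [Nonempty A] [DecidableEq A]
variable {C : CartanScheme I A}

/-- Any plane word's triple is realizable by a plane word of length `nP`. -/
lemma planeF3 (hC : C.IsFRS) {s t : I} (hst : s ≠ t) :
    ∀ (N : ℕ) (x : A) (l : List I), PlaneW s t l → C.nP s t x (C.wordMap x l) = N →
      ∃ r, PlaneW s t r ∧ C.wordTarget x r = C.wordTarget x l ∧
        C.wordMap x r = C.wordMap x l ∧ r.length = N := by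
  intro N
  induction N with
  | zero =>
      intro x l hl h0
      have hmap : C.wordMap x l = id := plane_map_id hC hst x hl h0
      have htgt : C.wordTarget x l = x := plane_obj hC hst l.length x l hl rfl hmap
      refine ⟨[], fun c hc => absurd hc List.not_mem_nil, ?_, ?_, rfl⟩
      · rw [htgt]; rfl
      · rw [hmap]; rfl
  | succ n ih =>
      intro x l hl hn
      obtain ⟨j, hj, hjneg⟩ := exists_descent_plane hC hst x hl (by omega)
      have hstep : C.nP s t x (C.wordMap x (j :: l)) + 1 = C.nP s t x (C.wordMap x l) :=
        nP_cons_neg hC x hl hj hjneg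
      have hstep' : C.nP s t x (C.wordMap x (j :: l)) = n := by omega
      have hjl : PlaneW s t (j :: l) := by
        intro c hc
        rcases List.mem_cons.1 hc with h | h
        · subst h; exact hj
        · exact hl c h
      obtain ⟨r', hr'p, hr't, hr'm, hr'l⟩ := ih x (j :: l) hjl hstep'
      refine ⟨j :: r', ?_, ?_, ?_, by simp [hr'l]⟩
      · intro c hc
        rcases List.mem_cons.1 hc with h | h
        · subst h; exact hj
        · exact hr'p c h
      · rw [wordTarget_cons, hr't, wordTarget_cons, C.ρ_invol]
      · funext v
        rw [wordMap_cons, hr't, hr'm]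
        rw [wordTarget_cons]
        show C.sigma (C.ρ j (C.wordTarget x l)) j (C.wordMap x (j :: l) v) = _
        rw [wordMap_cons]
        exact sigma_sigma_rho _ j _

set_option maxHeartbeats 1600000 in
/-- Rank-two key lemma: if the plane word `p ++ [s]` admits no realization of length
`≤ |p|` by a plane word (with matching source, target and map), then `p` sends `α_s`
to a positive root. -/
lemma R2L (hC : C.IsFRS) {s t : I} (hst : s ≠ t) (a : A) (p : List I) (hp : PlaneW s t p)
    (hmin : ¬ ∃ q', PlaneW s t q' ∧
      C.wordTarget (C.ρ s a) q' = C.wordTarget (C.ρ s a) (p ++ [s]) ∧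
      C.wordMap (C.ρ s a) q' = C.wordMap (C.ρ s a) (p ++ [s]) ∧ q'.length ≤ p.length) :
    PosV (C.wordMap a p (Pi.single s 1)) := by
  by_contra hneg
  have hrho : C.ρ s (C.ρ s a) = a := C.ρ_invol s a
  have hmap1 : ∀ v, C.wordMap (C.ρ s a) (p ++ [s]) v
      = C.wordMap a p (C.sigma (C.ρ s a) s v) := by
    intro v
    rw [C.wordMap_append, wordTarget_singleton, hrho, wordMap_singleton]
    rfl
  have hrows : ∀ j, C.c a s j = C.c (C.ρ s a) s j := fun j => (C.c_rho a s j).symm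
  have hsig1 : ∀ v, C.sigma a s (C.sigma (C.ρ s a) s v) = v := fun v =>
    sigma_sigma_of_rows (C.ρ s a) a s hrows v
  have hsig2 : ∀ v, C.sigma (C.ρ s a) s (C.sigma a s v) = v := fun v =>
    sigma_sigma_rho a s v
  have hplane_sw : PlaneW s t (p ++ [s]) := by
    intro c hc
    rcases List.mem_append.1 hc with h | h
    · exact hp c h
    · rw [List.mem_singleton.1 h]; exact Or.inl rfl
  have hesmem : (Pi.single s 1 : I → ℤ) ∈ C.flipsK (PlaneV s t) a (C.wordMap a p) :=
    ⟨single_mem_roots a s, posV_single s, planeV_single_s s t, hneg⟩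
  have hsigroots : ∀ {α : I → ℤ}, α ∈ C.roots (C.ρ s a) →
      C.sigma (C.ρ s a) s α ∈ C.roots a := by
    intro α h
    have h2 := sigma_mem_roots (C := C) s h
    rwa [hrho] at h2
  have hset : C.flipsK (PlaneV s t) (C.ρ s a) (C.wordMap (C.ρ s a) (p ++ [s]))
      = C.sigma a s '' (C.flipsK (PlaneV s t) a (C.wordMap a p) \ {Pi.single s 1}) := by
    ext α
    constructor
    · rintro ⟨hroot, hpos, hplane, hnp⟩
      have hroot2 : C.sigma (C.ρ s a) s α ∈ C.roots a := hsigroots hroot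
      have hposσ : PosV (C.sigma (C.ρ s a) s α) := by
        by_contra hq
        have hα : α = Pi.single s 1 := claimA hC s hroot hpos hq
        apply hnp
        rw [hα, hmap1, sigma_single_self, wordMap_neg]
        have hPes : NegV (C.wordMap a p (Pi.single s 1)) :=
          neg_of_not_pos hC (wordMap_mem_roots p (single_mem_roots a s)) hneg
        exact posV_neg_iff.2 hPes
      refine ⟨C.sigma (C.ρ s a) s α, ⟨⟨hroot2, hposσ, ?_, ?_⟩, ?_⟩, hsig1 α⟩
      · exact sigma_planeV (C.ρ s a) (Or.inl rfl) hplane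
      · intro hq
        apply hnp
        rw [hmap1]
        exact hq
      · intro hq
        rw [Set.mem_singleton_iff] at hq
        have hα2 : α = C.sigma a s (Pi.single s 1) := by rw [← hq, hsig1]
        rw [sigma_single_self] at hα2
        have h2 := hpos s
        rw [hα2] at h2
        simp at h2
    · rintro ⟨β, ⟨⟨hroot, hpos, hplane, hnp⟩, hne⟩, hβ⟩
      rw [Set.mem_singleton_iff] at hne
      subst hβ
      have hroot2 : C.sigma a s β ∈ C.roots (C.ρ s a) := sigma_mem_roots s hroot
      refine ⟨hroot2, ?_, sigma_planeV a (Or.inl rfl) hplane, ?_⟩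
      · by_contra hq
        exact hne (claimA hC s hroot hpos hq)
      · rw [hmap1, hsig2]
        exact hnp
  have hcard : C.nP s t (C.ρ s a) (C.wordMap (C.ρ s a) (p ++ [s])) + 1
      = C.nP s t a (C.wordMap a p) := by
    rw [nP, hset, Set.ncard_image_of_injOn]
    · exact Set.ncard_diff_singleton_add_one hesmem (flipsK_finite hC _ _ _)
    · intro u _ v _ huv
      have h2 := congrArg (C.sigma (C.ρ s a) s) huv
      rwa [hsig2, hsig2] at h2
  have hlen : C.nP s t a (C.wordMap a p) ≤ p.length := nP_le_length hC a hp
  obtain ⟨r, hrp, hrt, hrm, hrl⟩ := planeF3 hC hst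
    (C.nP s t (C.ρ s a) (C.wordMap (C.ρ s a) (p ++ [s]))) (C.ρ s a) (p ++ [s]) hplane_sw rfl
  exact hmin ⟨r, hrp, hrt, hrm, by omega⟩

end CartanScheme
namespace CartanScheme

variable {I A : Type} [Fintype I] [DecidableEq I] [Fintype A] [Nonempty A] [DecidableEq A]
variable {C : CartanScheme I A}

/-- The morphism determined by a word. -/
def morOf (C : CartanScheme I A) (a : A) (l : List I) : Mor C :=
  ⟨a, C.wordTarget a l, C.wordMap a l, ⟨l, rfl, rfl⟩⟩

lemma realizes_morOf (a : A) (l : List I) : Realizes (morOf C a l) l := ⟨rfl, rfl⟩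

lemma not_posV_neg_of_pos_root {b : A} {α : I → ℤ} (hr : α ∈ C.roots b)
    (hp : PosV α) : ¬ PosV (-α) := by
  intro h
  apply roots_nonzero hr
  funext k
  have h1 := hp k
  have h2 := h k
  simp at h2 ⊢
  omega

lemma pre_morOf_concat (w : Mor C) {m : List I} {c : I} (h : Realizes w (m ++ [c])) :
    pre (morOf C (C.ρ c w.src) m) c = w := by
  have h1 := h.1
  have h2 := h.2
  rw [C.wordTarget_append, wordTarget_singleton] at h1
  rw [C.wordMap_append, wordTarget_singleton, wordMap_singleton] at h2
  apply Mor.ext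
  · show C.ρ c (C.ρ c w.src) = w.src
    rw [C.ρ_invol]
  · exact h1
  · funext v
    show C.wordMap (C.ρ c w.src) m (C.sigma (C.ρ c (C.ρ c w.src)) c v) = w.toFun v
    rw [C.ρ_invol, ← h2]
    rfl

/-- Length of the truncated morphism. -/
lemma len_morOf_concat (hC : C.IsFRS) (w : Mor C) {m : List I} {c : I}
    (h : Realizes w (m ++ [c])) (hlen : (m ++ [c]).length = len w) :
    len (morOf C (C.ρ c w.src) m) + 1 = len w := by
  have hle : len (morOf C (C.ρ c w.src) m) ≤ m.length := len_le (realizes_morOf _ m)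
  have hge : ∀ l₁, Realizes (morOf C (C.ρ c w.src) m) l₁ → Realizes w (l₁ ++ [c]) := by
    intro l₁ hreal
    have ht1 : C.wordTarget (C.ρ c w.src) l₁ = C.wordTarget (C.ρ c w.src) m := hreal.1
    have hm1 : C.wordMap (C.ρ c w.src) l₁ = C.wordMap (C.ρ c w.src) m := hreal.2
    constructor
    · show C.wordTarget w.src (l₁ ++ [c]) = w.tgt
      rw [C.wordTarget_append, wordTarget_singleton, ht1]
      have h1 := h.1
      rwa [C.wordTarget_append, wordTarget_singleton] at h1
    · show C.wordMap w.src (l₁ ++ [c]) = w.toFun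
      rw [C.wordMap_append, wordTarget_singleton, hm1]
      have h2 := h.2
      rwa [C.wordMap_append, wordTarget_singleton] at h2
  obtain ⟨l₁, hl₁, hlen₁⟩ := len_spec (morOf C (C.ρ c w.src) m)
  have := len_le (hge l₁ hl₁)
  simp only [List.length_append, List.length_cons, List.length_nil] at this hlen
  omega

/-- The stripping loop: strip plane descents off a factorization until both plane
letters are ascents. -/
lemma strip (hC : C.IsFRS) {s t : I} (w : Mor C) :
    ∀ (K : ℕ) (u : Mor C) (p : List I), len u = K →
      PlaneW s t p → C.wordTarget w.src p = u.src → u.tgt = w.tgt →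
      w.toFun = u.toFun ∘ C.wordMap w.src p → len w = len u + p.length →
      ∃ (u' : Mor C) (p' : List I), PlaneW s t p' ∧ C.wordTarget w.src p' = u'.src ∧
        u'.tgt = w.tgt ∧ w.toFun = u'.toFun ∘ C.wordMap w.src p' ∧
        len w = len u' + p'.length ∧ p.length ≤ p'.length ∧
        len u' < len (pre u' s) ∧ len u' < len (pre u' t) := by
  intro K
  induction K using Nat.strong_induction_on with
  | _ K IHK =>
  intro u p hK hp hsrc htgt hmap hsum
  have hstep : ∀ c, (c = s ∨ c = t) → len (pre u c) ≤ len u →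
      ∃ (u' : Mor C) (p' : List I), PlaneW s t p' ∧ C.wordTarget w.src p' = u'.src ∧
        u'.tgt = w.tgt ∧ w.toFun = u'.toFun ∘ C.wordMap w.src p' ∧
        len w = len u' + p'.length ∧ p.length ≤ p'.length ∧
        len u' < len (pre u' s) ∧ len u' < len (pre u' t) := by
    intro c hc hdesc
    have hlt : len (pre u c) + 1 = len u := by
      rcases len_pre_cases hC u c with h | h <;> omega
    have hp' : PlaneW s t (c :: p) := by
      intro d hd
      rcases List.mem_cons.1 hd with h | h
      · subst h; exact hc
      · exact hp d h
    have hsrc' : C.wordTarget w.src (c :: p) = (pre u c).src := by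
      rw [wordTarget_cons, hsrc]
      rfl
    have hmap' : w.toFun = (pre u c).toFun ∘ C.wordMap w.src (c :: p) := by
      funext v
      rw [hmap]
      show u.toFun (C.wordMap w.src p v)
          = u.toFun (C.sigma (C.ρ c u.src) c (C.wordMap w.src (c :: p) v))
      congr 1
      rw [wordMap_cons, hsrc, sigma_sigma_rho]
    obtain ⟨u', p', a1, a2, a3, a4, a5, a6, a7, a8⟩ :=
      IHK (len (pre u c)) (by omega) (pre u c) (c :: p) rfl hp' hsrc' htgt hmap'
        (by simp only [List.length_cons]; omega)
    exact ⟨u', p', a1, a2, a3, a4, a5, by simp at a6 ⊢; omega, a7, a8⟩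
  by_cases hcs : len (pre u s) ≤ len u
  · exact hstep s (Or.inl rfl) hcs
  · by_cases hct : len (pre u t) ≤ len u
    · exact hstep t (Or.inr rfl) hct
    · exact ⟨u, p, hp, hsrc, htgt, hmap, hsum, le_rfl, by omega, by omega⟩

/-- The key lemma: if `ℓ(wσ_s) > ℓ(w)` then `w(α_s) > 0`. -/
lemma keyLemma (hC : C.IsFRS) : ∀ (k : ℕ) (w : Mor C), len w = k → ∀ s : I,
    len w < len (pre w s) → PosV (w.toFun (Pi.single s 1)) := by
  intro k
  induction k using Nat.strong_induction_on with
  | _ k IHk =>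
  intro w hk s hs
  obtain ⟨l, hl, hlen⟩ := len_spec w
  rcases List.eq_nil_or_concat l with rfl | ⟨m, t0, hl0⟩
  · have h2 := hl.2
    rw [← h2]
    exact posV_single s
  rw [List.concat_eq_append] at hl0
  subst hl0
  have htgt : C.wordTarget (C.ρ t0 w.src) m = w.tgt := by
    have h1 := hl.1
    rwa [C.wordTarget_append, wordTarget_singleton] at h1
  have hmapw : C.wordMap (C.ρ t0 w.src) m ∘ C.sigma w.src t0 = w.toFun := by
    have h2 := hl.2
    rwa [C.wordMap_append, wordTarget_singleton, wordMap_singleton] at h2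
  have hts : t0 ≠ s := by
    intro heq
    have hpre : Realizes (pre w s) m := by
      constructor
      · show C.wordTarget (C.ρ s w.src) m = w.tgt
        rw [← heq]
        exact htgt
      · show C.wordMap (C.ρ s w.src) m = w.toFun ∘ C.sigma (C.ρ s w.src) s
        funext v
        rw [← hmapw, ← heq]
        show C.wordMap (C.ρ t0 w.src) m v
          = C.wordMap (C.ρ t0 w.src) m (C.sigma w.src t0 (C.sigma (C.ρ t0 w.src) t0 v))
        rw [sigma_sigma_rho']
    have := len_le hpre
    have hmlen : (m ++ [t0]).length = len w := hlen
    simp only [List.length_append, List.length_cons, List.length_nil] at hmlen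
    omega
  have hst : s ≠ t0 := Ne.symm hts
  -- initial factorization  w = u₁ ∘ σ_{t0}
  have hu₁len : len (morOf C (C.ρ t0 w.src) m) + 1 = len w := len_morOf_concat hC w hl hlen
  obtain ⟨u', p', hp', hsrc', htgt', hmap', hsum', hplen', hxs, hxt⟩ :=
    strip (s := s) (t := t0) hC w (len (morOf C (C.ρ t0 w.src) m))
      (morOf C (C.ρ t0 w.src) m) [t0] rfl
      (by intro d hd; rw [List.mem_singleton.1 hd]; exact Or.inr rfl)
      (by rw [wordTarget_singleton]; rfl)
      htgt
      (by funext v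
          rw [← hmapw]
          show C.wordMap (C.ρ t0 w.src) m (C.sigma w.src t0 v)
            = C.wordMap (C.ρ t0 w.src) m (C.wordMap w.src [t0] v)
          rw [wordMap_singleton])
      (by simp only [List.length_cons, List.length_nil]; omega)
  have hlenu' : len u' < k := by
    simp only [List.length_singleton] at hplen'
    omega
  have hpos_s : PosV (u'.toFun (Pi.single s 1)) := IHk (len u') (by omega) u' rfl s hxs
  have hpos_t : PosV (u'.toFun (Pi.single t0 1)) := IHk (len u') (by omega) u' rfl t0 hxt
  -- R2L hypothesis
  have hmin : ¬ ∃ q', PlaneW s t0 q' ∧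
      C.wordTarget (C.ρ s w.src) q' = C.wordTarget (C.ρ s w.src) (p' ++ [s]) ∧
      C.wordMap (C.ρ s w.src) q' = C.wordMap (C.ρ s w.src) (p' ++ [s]) ∧
      q'.length ≤ p'.length := by
    rintro ⟨q', hq'p, hq't, hq'm, hq'len⟩
    obtain ⟨lu', hlu', hlu'len⟩ := len_spec u'
    have htq : C.wordTarget (C.ρ s w.src) (p' ++ [s]) = u'.src := by
      rw [C.wordTarget_append, wordTarget_singleton, C.ρ_invol, hsrc']
    have hmq : ∀ v, C.wordMap (C.ρ s w.src) (p' ++ [s]) v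
        = C.wordMap w.src p' (C.sigma (C.ρ s w.src) s v) := by
      intro v
      rw [C.wordMap_append, wordTarget_singleton, C.ρ_invol, wordMap_singleton]
      rfl
    have hreal : Realizes (pre w s) (lu' ++ q') := by
      constructor
      · show C.wordTarget (C.ρ s w.src) (lu' ++ q') = w.tgt
        rw [C.wordTarget_append, hq't, htq, hlu'.1, htgt']
      · show C.wordMap (C.ρ s w.src) (lu' ++ q') = w.toFun ∘ C.sigma (C.ρ s w.src) s
        rw [C.wordMap_append, hq't, htq, hlu'.2, hq'm]
        funext v
        show u'.toFun (C.wordMap (C.ρ s w.src) (p' ++ [s]) v)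
          = w.toFun (C.sigma (C.ρ s w.src) s v)
        rw [hmq, hmap']
        rfl
    have h1 := len_le hreal
    simp only [List.length_append] at h1
    omega
  have hφpos : PosV (C.wordMap w.src p' (Pi.single s 1)) := R2L hC hst w.src p' hp' hmin
  have hφplane : PlaneV s t0 (C.wordMap w.src p' (Pi.single s 1)) :=
    wordMap_planeV w.src hp' (planeV_single_s s t0)
  -- conclude
  obtain ⟨lu', hlu', hlu'len⟩ := len_spec u'
  have hexp : C.wordMap w.src p' (Pi.single s 1)
      = (C.wordMap w.src p' (Pi.single s 1) s) • (Pi.single s 1 : I → ℤ)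
        + (C.wordMap w.src p' (Pi.single s 1) t0) • (Pi.single t0 1 : I → ℤ) :=
    planeV_expand hst hφplane
  have hwts : w.toFun (Pi.single s 1) = u'.toFun (C.wordMap w.src p' (Pi.single s 1)) := by
    rw [hmap']
    rfl
  have hlin : C.wordMap u'.src lu' (C.wordMap w.src p' (Pi.single s 1))
      = (C.wordMap w.src p' (Pi.single s 1) s) • C.wordMap u'.src lu' (Pi.single s 1)
        + (C.wordMap w.src p' (Pi.single s 1) t0) • C.wordMap u'.src lu' (Pi.single t0 1) := by
    conv_lhs => rw [hexp]
    rw [wordMap_add, wordMap_smul, wordMap_smul]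
  rw [hwts, ← hlu'.2, hlin]
  intro r
  simp only [Pi.add_apply, Pi.smul_apply, smul_eq_mul]
  have h1 := hφpos s
  have h2 := hφpos t0
  have h3 : 0 ≤ C.wordMap u'.src lu' (Pi.single s 1) r := by
    rw [hlu'.2]
    exact hpos_s r
  have h4 : 0 ≤ C.wordMap u'.src lu' (Pi.single t0 1) r := by
    rw [hlu'.2]
    exact hpos_t r
  positivity

/-- A morphism without inversions has length zero. -/
lemma len_eq_zero_of_nInv_zero (hC : C.IsFRS) (w : Mor C)
    (h0 : C.nInv w.src w.toFun = 0) : len w = 0 := by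
  by_contra hne
  obtain ⟨l, hl, hlen⟩ := len_spec w
  rcases List.eq_nil_or_concat l with rfl | ⟨m, c, hl0⟩
  · exact hne (by simp at hlen; omega)
  rw [List.concat_eq_append] at hl0
  subst hl0
  have hu₁len := len_morOf_concat hC w hl hlen
  have hpre : pre (morOf C (C.ρ c w.src) m) c = w := pre_morOf_concat w hl
  have hKL : PosV ((morOf C (C.ρ c w.src) m).toFun (Pi.single c 1)) := by
    apply keyLemma hC (len (morOf C (C.ρ c w.src) m)) _ rfl c
    rw [hpre]
    omega
  have hmapw : C.wordMap (C.ρ c w.src) m ∘ C.sigma w.src c = w.toFun := by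
    have h2 := hl.2
    rwa [C.wordMap_append, wordTarget_singleton, wordMap_singleton] at h2
  have hwc : w.toFun (Pi.single c 1) = -(C.wordMap (C.ρ c w.src) m (Pi.single c 1)) := by
    rw [← hmapw]
    show C.wordMap (C.ρ c w.src) m (C.sigma w.src c (Pi.single c 1)) = _
    rw [sigma_single_self, wordMap_neg]
  have hroot : C.wordMap (C.ρ c w.src) m (Pi.single c 1)
      ∈ C.roots (C.wordTarget (C.ρ c w.src) m) :=
    wordMap_mem_roots m (single_mem_roots _ c)
  have hmem : (Pi.single c 1 : I → ℤ) ∈ C.flipsK TrivK w.src w.toFun := by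
    refine ⟨single_mem_roots _ c, posV_single c, trivial, ?_⟩
    rw [hwc]
    exact not_posV_neg_of_pos_root hroot hKL
  have hempty : C.flipsK TrivK w.src w.toFun = ∅ :=
    (Set.ncard_eq_zero (flipsK_finite hC _ _ _)).1 h0
  rw [hempty] at hmem
  exact hmem

/-- Any morphism is realizable in `nInv` many letters. -/
lemma len_le_nInv (hC : C.IsFRS) : ∀ (n : ℕ) (w : Mor C),
    C.nInv w.src w.toFun = n → len w ≤ n := by
  intro n
  induction n with
  | zero =>
      intro w h0
      rw [len_eq_zero_of_nInv_zero hC w h0]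
  | succ n ih =>
      intro w hn
      obtain ⟨l, hl, hlen⟩ := len_spec w
      have hn' : C.nInv w.src (C.wordMap w.src l) = n + 1 := by rw [hl.2]; exact hn
      obtain ⟨j, hj⟩ := exists_descent hC w.src l (by omega)
      -- the morphism σ_j ∘ w
      have hspec : C.wordTarget w.src (j :: l) = C.ρ j w.tgt ∧
          C.wordMap w.src (j :: l) = C.sigma w.tgt j ∘ w.toFun := by
        constructor
        · rw [wordTarget_cons, hl.1]
        · funext v
          rw [wordMap_cons, hl.1, hl.2]
          rfl
      set w' : Mor C := ⟨w.src, C.ρ j w.tgt, C.sigma w.tgt j ∘ w.toFun,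
        ⟨j :: l, hspec.1, hspec.2⟩⟩ with hw'
      have hnw' : C.nInv w'.src w'.toFun = n := by
        have hcons := nInv_cons_neg hC w.src l j hj
        have he : C.nInv w.src (C.wordMap w.src (j :: l)) = C.nInv w'.src w'.toFun := by
          show C.nInv w.src (C.wordMap w.src (j :: l)) = C.nInv w.src (C.sigma w.tgt j ∘ w.toFun)
          rw [hspec.2]
        omega
      have hlw' := ih w' hnw'
      obtain ⟨lw', hlw'real, hlw'len⟩ := len_spec w'
      have hreal : Realizes w (j :: lw') := by
        constructor
        · rw [wordTarget_cons, hlw'real.1]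
          show C.ρ j (C.ρ j w.tgt) = w.tgt
          rw [C.ρ_invol]
        · funext v
          rw [wordMap_cons, hlw'real.1, hlw'real.2]
          show C.sigma (C.ρ j w.tgt) j (C.sigma w.tgt j (w.toFun v)) = w.toFun v
          rw [sigma_sigma_rho]
      have := len_le hreal
      simp only [List.length_cons] at this
      omega

lemma len_eq_nInv (hC : C.IsFRS) (w : Mor C) : len w = C.nInv w.src w.toFun := by
  have h1 := nMor_le_len hC w
  have h2 := len_le_nInv hC (C.nInv w.src w.toFun) w rfl
  rw [nMor] at h1
  omega

/-- Every letter of a full-inversion word supports an inversion. -/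
lemma support_witness (hC : C.IsFRS) : ∀ (l : List I) (a : A),
    C.nInv a (C.wordMap a l) = l.length →
    ∀ i ∈ l, ∃ β, β ∈ C.flipsK TrivK a (C.wordMap a l) ∧ β i ≠ 0 := by
  intro l
  induction l with
  | nil =>
      intro a _ i hi
      exact absurd hi List.not_mem_nil
  | cons j m ih =>
      intro a hn i hi
      have hm_le := nInv_le_length hC a m
      by_cases hβ : PosV (C.wordMap (C.wordTarget a m) m.reverse (Pi.single j 1))
      · have hcons := nInv_cons_pos hC a m j hβ
        have hm_eq : C.nInv a (C.wordMap a m) = m.length := by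
          simp only [List.length_cons] at hn
          omega
        obtain ⟨hset, -⟩ := flipsK_cons_pos (C := C) TrivK a m j hC trivial hβ
        rcases List.mem_cons.1 hi with rfl | him
        · by_cases hjm : i ∈ m
          · obtain ⟨β', hβ'mem, hβ'i⟩ := ih a hm_eq i hjm
            exact ⟨β', by rw [hset]; exact Set.mem_insert_of_mem _ hβ'mem, hβ'i⟩
          · refine ⟨C.wordMap (C.wordTarget a m) m.reverse (Pi.single i 1),
              by rw [hset]; exact Set.mem_insert _ _, ?_⟩
            have hirev : i ∉ m.reverse := fun h => hjm (List.mem_reverse.1 h)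
            rw [wordMap_apply_of_not_mem _ _ _ hirev]
            simp
        · obtain ⟨β', hβ'mem, hβ'i⟩ := ih a hm_eq i him
          exact ⟨β', by rw [hset]; exact Set.mem_insert_of_mem _ hβ'mem, hβ'i⟩
      · exfalso
        have hcons := nInv_cons_neg hC a m j hβ
        simp only [List.length_cons] at hn
        omega

/-- Letters of a reduced word occur in every word. -/
lemma letters_subset_aux (hC : C.IsFRS) (w : Mor C) {l l' : List I}
    (hl : IsReduced w l) (hl' : Realizes w l') : ∀ i ∈ l, i ∈ l' := by
  obtain ⟨hreal, hlen⟩ := hl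
  have hn : C.nInv w.src (C.wordMap w.src l) = l.length := by
    rw [hreal.2, ← len_eq_nInv hC w, hlen]
  intro i hi
  obtain ⟨β, ⟨hβroot, hβpos, -, hβnp⟩, hβi⟩ := support_witness hC l w.src hn i hi
  rw [hreal.2] at hβnp
  by_contra hil'
  have hco : w.toFun β i = β i := by
    rw [← hl'.2]
    exact wordMap_apply_of_not_mem _ _ _ hil'
  have hroot2 : w.toFun β ∈ C.roots (C.wordTarget w.src l') := by
    rw [← hl'.2]
    exact wordMap_mem_roots l' hβroot
  have hNeg : NegV (w.toFun β) := neg_of_not_pos hC hroot2 hβnp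
  have h1 := hNeg i
  have h2 := hβpos i
  rw [hco] at h1
  omega

end CartanScheme

variable {I A : Type} [Fintype I] [DecidableEq I] [Fintype A] [Nonempty A] [DecidableEq A]

open CartanScheme


/-- If `w = σ_{i_1}⋯σ_{i_k}` is a reduced decomposition and
`w = σ_{j_1}⋯σ_{j_l}` any other decomposition, then `{i_1,…,i_k} ⊆ {j_1,…,j_l}` as sets.
In particular any two reduced decompositions of `w` use the same set of letters. -/
theorem reduced_word_letters_subset (C : CartanScheme I A) (hC : C.IsFRS)
    (w : Mor C) (l l' : List I) (hl : IsReduced w l) (hl' : Realizes w l') :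
    (∀ i ∈ l, i ∈ l') ∧ (IsReduced w l' → l.toFinset = l'.toFinset) := by
  refine ⟨letters_subset_aux hC w hl hl', ?_⟩
  intro hl'red
  have h1 := letters_subset_aux hC w hl hl'
  have h2 := letters_subset_aux hC w hl'red hl.1
  apply Finset.Subset.antisymm
  · intro x hx
    exact List.mem_toFinset.2 (h1 x (List.mem_toFinset.1 hx))
  · intro x hx
    exact List.mem_toFinset.2 (h2 x (List.mem_toFinset.1 hx))
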